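/- arXiv:2312.13681 — 5 statements merged into one kernel-verified Lean document; each statement's English description precedes it below -/
import Mathlib

section
/- For every partition λ, q̂_λ(t) = Σ_{τ} (1−t)^{l(τ)} q_{λ−τ}(t), where the sum is over all compositions τ with τ ⊂ λ (i.e. τ_i ≤ λ_i for all i), and λ−τ = (λ_1−τ_1, λ_2−τ_2, …) is the componentwise difference. -/
open Finset

noncomputable section

abbrev FF : Type := RatFunc ℚ

/-- The ring Λ of symmetric functions over ℚ(t), as the polynomial ring in the
algebraically independent power sums `pp 1, pp 2, …`. -/
abbrev SymF : Type := MvPolynomial ℕ+ FF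

/-- The variable t of the ground field ℚ(t). -/
def tv : FF := RatFunc.X

/-- the power sum p_n -/
def pp (n : ℕ+) : SymF := MvPolynomial.X n

/-- q_n(a), defined by Σ_{n≥0} q_n(a) z^n = exp(Σ_{n≥1} ((1-a^n)/n) p_n z^n);
equivalently (taking the logarithmic derivative of the generating function)
by q_0 = 1 and n·q_n = Σ_{k=1}^{n} (1-a^k) p_k q_{n-k}. -/
def qn (a : FF) : ℕ → SymF
  | 0 => 1
  | n + 1 =>
      (((n : FF) + 1)⁻¹) • ∑ k ∈ Finset.range (n + 1),
        (MvPolynomial.C (1 - a ^ (k + 1))) * pp ⟨k + 1, Nat.succ_pos k⟩ * qn a (n - k)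
  termination_by n => n
  decreasing_by omega

/-- q̂_n(a), defined by Σ_{n≥0} q̂_n(a) z^n = exp(Σ_{n≥1} ((1-a^n)/n)(1+p_n) z^n);
equivalently by q̂_0 = 1 and n·q̂_n = Σ_{k=1}^{n} (1-a^k)(1+p_k) q̂_{n-k}. -/
def qhat (a : FF) : ℕ → SymF
  | 0 => 1
  | n + 1 =>
      (((n : FF) + 1)⁻¹) • ∑ k ∈ Finset.range (n + 1),
        (MvPolynomial.C (1 - a ^ (k + 1))) * (1 + pp ⟨k + 1, Nat.succ_pos k⟩) * qhat a (n - k)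
  termination_by n => n
  decreasing_by omega

/-- the number of nonzero parts of a composition -/
def ell {l : ℕ} (mu : Fin l → ℕ) : ℕ := (Finset.univ.filter fun i => mu i ≠ 0).card

/-- q̂_μ(a) = ∏_i q̂_{μ_i}(a). -/
def qhatProd (a : FF) {l : ℕ} (mu : Fin l → ℕ) : SymF := ∏ i, qhat a (mu i)

/-- q_μ(a) = ∏_i q_{μ_i}(a). -/
def qnProd (a : FF) {l : ℕ} (mu : Fin l → ℕ) : SymF := ∏ i, qn a (mu i)

instance : CharZero FF :=
  charZero_of_injective_algebraMap (algebraMap ℚ FF).injective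

lemma cast_ne (n : ℕ) : ((n : FF) + 1) ≠ 0 := by
  exact_mod_cast (Nat.cast_add_one_ne_zero n : ((n+1 : ℕ) : FF) ≠ 0)

lemma qn_rec (a : FF) (n : ℕ) : ((n : FF) + 1) • qn a (n+1) =
    ∑ k ∈ Finset.range (n + 1),
        (MvPolynomial.C (1 - a ^ (k + 1))) * pp ⟨k + 1, Nat.succ_pos k⟩ * qn a (n - k) := by
  rw [qn, smul_inv_smul₀ (cast_ne n)]

lemma qhat_rec (a : FF) (n : ℕ) : ((n : FF) + 1) • qhat a (n+1) =
    ∑ k ∈ Finset.range (n + 1),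
        (MvPolynomial.C (1 - a ^ (k + 1))) * (1 + pp ⟨k + 1, Nat.succ_pos k⟩) * qhat a (n - k) := by
  rw [qhat, smul_inv_smul₀ (cast_ne n)]

lemma tri {M : Type*} [AddCommMonoid M] (f : ℕ → ℕ → M) :
    ∀ n : ℕ, ∑ k ∈ range n, ∑ j ∈ range (n - k), f k j
      = ∑ s ∈ range n, ∑ k ∈ range (s + 1), f k (s - k) := by
  intro n
  induction n with
  | zero => simp
  | succ n ih =>
    rw [sum_range_succ, sum_range_succ]
    have h1 : ∀ k ∈ range n, ∑ j ∈ range (n + 1 - k), f k j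
        = ∑ j ∈ range (n - k), f k j + f k (n - k) := by
      intro k hk
      rw [mem_range] at hk
      rw [Nat.succ_sub hk.le, sum_range_succ]
    rw [sum_congr rfl h1, sum_add_distrib, ih]
    have h2 : n + 1 - n = 1 := by omega
    rw [h2, sum_range_one, sum_range_succ, Nat.sub_self, add_assoc]

lemma geo (a : FF) : ∀ m : ℕ,
    (1 - a ^ (m + 1)) + (1 - a) * ∑ k ∈ range m, (1 - a ^ (k + 1))
      = ((m : FF) + 1) * (1 - a) := by
  intro m
  induction m with
  | zero => simp
  | succ m ih =>
    rw [sum_range_succ, Nat.cast_succ]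
    ring_nf
    ring_nf at ih
    linear_combination ih

lemma sym {M : Type*} [AddCommMonoid M] (f : ℕ → ℕ → M) (n : ℕ) :
    ∑ k ∈ range n, ∑ j ∈ range (n - k), f k j
      = ∑ j ∈ range n, ∑ k ∈ range (n - j), f k j := by
  rw [tri f n, tri (fun j k => f k j) n]
  apply sum_congr rfl
  intro s _
  have := Finset.sum_range_reflect (fun k => f k (s - k)) (s + 1)
  rw [← this]
  apply sum_congr rfl
  intro j hj
  rw [mem_range] at hj
  have h1 : s + 1 - 1 - j = s - j := by omega
  have h2 : s - (s - j) = j := by omega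
  rw [h1, h2]

open MvPolynomial in
lemma key (a : FF) : ∀ n : ℕ, qhat a n
    = qn a n + MvPolynomial.C (1 - a) * ∑ j ∈ range n, qn a j := by
  intro n
  induction n using Nat.strong_induction_on with
  | _ n ih =>
  match n with
  | 0 => simp [qhat, qn]
  | m + 1 =>
    apply smul_right_injective SymF (cast_ne m)
    show ((m : FF) + 1) • qhat a (m + 1) = _
    set T : ℕ → SymF := fun r => ∑ j ∈ range r, qn a j with hT
    set P : ℕ → SymF := fun k => pp ⟨k + 1, Nat.succ_pos k⟩ with hP
    calc ((m : FF) + 1) • qhat a (m + 1)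
        = ∑ k ∈ range (m + 1), MvPolynomial.C (1 - a ^ (k + 1)) * (1 + P k)
            * (qn a (m - k) + MvPolynomial.C (1 - a) * T (m - k)) := by
          rw [qhat_rec]
          exact sum_congr rfl fun k hk => by rw [← ih (m - k) (by omega)]
      _ = (∑ k ∈ range (m + 1), MvPolynomial.C (1 - a ^ (k + 1)) * P k * qn a (m - k))
          + ((∑ k ∈ range (m + 1), MvPolynomial.C (1 - a ^ (k + 1)) * qn a (m - k))
          + (MvPolynomial.C (1 - a) * (∑ k ∈ range (m + 1),
                MvPolynomial.C (1 - a ^ (k + 1)) * T (m - k))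
          + MvPolynomial.C (1 - a) * (∑ k ∈ range (m + 1),
                MvPolynomial.C (1 - a ^ (k + 1)) * P k * T (m - k)))) := by
          rw [mul_sum, mul_sum, ← sum_add_distrib, ← sum_add_distrib, ← sum_add_distrib]
          exact sum_congr rfl fun k _ => by ring
      _ = ((m : FF) + 1) • qn a (m + 1)
          + ((∑ j ∈ range (m + 1), MvPolynomial.C (1 - a ^ (m - j + 1)) * qn a j)
          + ((∑ j ∈ range (m + 1), MvPolynomial.C
                ((1 - a) * ∑ k ∈ range (m - j), (1 - a ^ (k + 1))) * qn a j)
          + (∑ j ∈ range (m + 1), MvPolynomial.C ((1 - a) * (j : FF)) * qn a j))) := by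
          congr 1
          · simp only [hP]
            exact (qn_rec a m).symm
          congr 1
          · rw [← sum_range_reflect (fun j => MvPolynomial.C (1 - a ^ (m - j + 1)) * qn a j) (m+1)]
            apply sum_congr rfl
            intro k hk
            rw [mem_range] at hk
            have h1 : m + 1 - 1 - k = m - k := by omega
            have h2 : m - (m - k) = k := by omega
            simp only [h1, h2]
          congr 1
          · -- piece C
            have e1 : ∑ k ∈ range (m + 1), MvPolynomial.C (1 - a ^ (k + 1)) * T (m - k)
                = ∑ k ∈ range m, ∑ j ∈ range (m - k),
                    MvPolynomial.C (1 - a ^ (k + 1)) * qn a j := by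
              rw [sum_range_succ, Nat.sub_self]
              simp only [hT, mul_sum, range_zero, sum_empty, mul_zero, add_zero]
            rw [e1, sym (fun k j => MvPolynomial.C (1 - a ^ (k + 1)) * qn a j) m,
              sum_range_succ, Nat.sub_self]
            simp only [range_zero, sum_empty, map_zero, mul_zero, map_mul, zero_mul, add_zero]
            rw [mul_sum]
            apply sum_congr rfl
            intro j _
            rw [← sum_mul, ← map_sum]; ring
          · -- piece E
            have e1 : ∑ k ∈ range (m + 1), MvPolynomial.C (1 - a ^ (k + 1)) * P k * T (m - k)
                = ∑ k ∈ range m, ∑ j ∈ range (m - k),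
                    MvPolynomial.C (1 - a ^ (k + 1)) * P k * qn a j := by
              rw [sum_range_succ, Nat.sub_self]
              simp only [hT, mul_sum, range_zero, sum_empty, mul_zero, add_zero]
            rw [e1, tri (fun k j => MvPolynomial.C (1 - a ^ (k + 1)) * P k * qn a j) m]
            have e2 : ∀ s ∈ range m, ∑ k ∈ range (s + 1),
                MvPolynomial.C (1 - a ^ (k + 1)) * P k * qn a (s - k)
                = ((s : FF) + 1) • qn a (s + 1) := by
              intro s _
              simp only [hP]
              exact (qn_rec a s).symm
            rw [sum_congr rfl e2]
            have e3 : ∑ j ∈ range (m + 1), MvPolynomial.C ((1 - a) * (j : FF)) * qn a j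
                = ∑ s ∈ range m, MvPolynomial.C ((1 - a) * ((s : FF) + 1)) * qn a (s + 1) := by
              rw [sum_range_succ']
              push_cast
              simp
            rw [e3, mul_sum]
            apply sum_congr rfl
            intro s _
            rw [MvPolynomial.smul_eq_C_mul, map_mul, mul_assoc]
      _ = ((m : FF) + 1) • (qn a (m + 1) + MvPolynomial.C (1 - a) * ∑ j ∈ range (m + 1), qn a j) := by
          rw [smul_add]
          congr 1
          rw [MvPolynomial.smul_eq_C_mul, ← mul_assoc, ← map_mul, mul_sum]
          rw [← sum_add_distrib, ← sum_add_distrib]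
          apply sum_congr rfl
          intro j hj
          rw [mem_range, Nat.lt_succ_iff] at hj
          rw [← add_mul, ← add_mul, ← map_add, ← map_add]
          congr 2
          have := geo a (m - j)
          have hc : ((m - j : ℕ) : FF) = (m : FF) - (j : FF) := by
            push_cast [Nat.cast_sub hj]; ring
          rw [hc] at this
          linear_combination this

lemma single (a : FF) (N : ℕ) :
    ∑ x ∈ Finset.Iic N, (MvPolynomial.C (if x = 0 then 1 else 1 - a)) * qn a (N - x)
      = qhat a N := by
  rw [key a N]
  have : Finset.Iic N = range (N + 1) := by ext x; simp [Nat.lt_succ_iff]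
  rw [this, sum_range_succ']
  have h0 : (if (0:ℕ) = 0 then (1:FF) else 1 - a) = 1 := if_pos rfl
  have hs : ∀ x : ℕ, (if x + 1 = 0 then (1:FF) else 1 - a) = 1 - a :=
    fun x => if_neg (Nat.succ_ne_zero x)
  simp only [h0, hs, Nat.sub_zero, eq_self_iff_true, if_true, map_one, one_mul]
  rw [add_comm]
  congr 1
  rw [mul_sum, ← sum_range_reflect (fun j => MvPolynomial.C (1 - a) * qn a j) N]
  apply sum_congr rfl
  intro x hx
  rw [mem_range] at hx
  have : N - (x + 1) = N - 1 - x := by omega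
  simp [this]


/-- For every partition λ (with parts λ_1 ≥ … ≥ λ_l > 0),
q̂_λ(t) = Σ_{τ ⊂ λ} (1-t)^{l(τ)} q_{λ-τ}(t), summed over all compositions τ with
τ_i ≤ λ_i for all i, with λ-τ the componentwise difference. -/
theorem qhatProd_eq_sum (l : ℕ) (lam : Fin l → ℕ)
    (h_anti : ∀ i j : Fin l, i ≤ j → lam j ≤ lam i) (h_pos : ∀ i, 0 < lam i) :
    qhatProd tv lam =
      ∑ τ ∈ Finset.Iic lam, MvPolynomial.C ((1 - tv) ^ ell τ) * qnProd tv (lam - τ) := by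
  have hIic : Finset.Iic lam = Fintype.piFinset fun i => Finset.Iic (lam i) := by
    ext τ; simp [Fintype.mem_piFinset, Pi.le_def]
  rw [hIic]
  have hsummand : ∀ τ : Fin l → ℕ,
      MvPolynomial.C ((1 - tv) ^ ell τ) * qnProd tv (lam - τ)
        = ∏ i, (MvPolynomial.C (if τ i = 0 then 1 else 1 - tv)) * qn tv (lam i - τ i) := by
    intro τ
    rw [prod_mul_distrib]
    congr 1
    · rw [← map_prod]
      congr 1
      rw [ell, ← prod_const, prod_filter]
      apply prod_congr rfl
      intro i _
      by_cases h : τ i = 0 <;> simp [h]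
  rw [show (∑ τ ∈ Fintype.piFinset fun i => Finset.Iic (lam i),
        MvPolynomial.C ((1 - tv) ^ ell τ) * qnProd tv (lam - τ)) = _ from
      sum_congr rfl fun τ _ => hsummand τ, ← Finset.prod_univ_sum (fun i => Finset.Iic (lam i))
      (fun i x => MvPolynomial.C (if x = 0 then 1 else 1 - tv) * qn tv (lam i - x))]
  rw [qhatProd]
  apply prod_congr rfl
  intro i _
  exact (single tv (lam i)).symm

end
end

section
/- Let λ be a partition of m and n ≥ m. Then χ^λ_{(1^n)}(q) = C(n,m) · m! / ∏_{(i,j)∈λ} h_{ij}, where C(n,m) is the binomial coefficient and h_{ij} = λ_i + λ'_j − i − j + 1 is the hook length of λ at the box (i,j), λ' being the conjugate partition. -/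
open Finset

noncomputable section

/-- z_λ, where the finitely supported function d records the multiplicities of the parts. -/
def zfac (d : ℕ+ →₀ ℕ) : FF :=
  ∏ i ∈ d.support, (((i : ℕ) : FF) ^ (d i) * (Nat.factorial (d i) : FF))

/-- The Hall inner product on Λ, determined by ⟨p_λ, p_μ⟩ = δ_{λμ} z_λ. -/
def hall (f g : SymF) : FF :=
  ∑ d ∈ f.support, MvPolynomial.coeff d f * MvPolynomial.coeff d g * zfac d

/-- the complete homogeneous symmetric function h_n, defined by
Σ_{n≥0} h_n z^n = exp(Σ_{n≥1} p_n z^n / n); equivalently by h_0 = 1 and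
n·h_n = Σ_{k=1}^{n} p_k h_{n-k} (Newton's identity). -/
def hh : ℕ → SymF
  | 0 => 1
  | n + 1 =>
      (((n : FF) + 1)⁻¹) • ∑ k ∈ Finset.range (n + 1),
        pp ⟨k + 1, Nat.succ_pos k⟩ * hh (n - k)
  termination_by n => n
  decreasing_by omega

/-- h_k for k ∈ ℤ, with h_k = 0 for k < 0. -/
def hZ (k : ℤ) : SymF := if 0 ≤ k then hh k.toNat else 0

/-- The Schur function s_λ (via the Jacobi–Trudi formula). -/
def schur {r : ℕ} (lam : Fin r → ℕ) : SymF :=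
  Matrix.det (Matrix.of fun i j : Fin r => hZ ((lam i : ℤ) + (j : ℤ) - (i : ℤ)))

/-- The variable q of ℚ(q) (the same as tv, renamed for readability). -/
def qv : FF := RatFunc.X

/-- C(μ;k): compositions τ ⊂ μ with |τ| = k. -/
def Cset {l : ℕ} (mu : Fin l → ℕ) (k : ℕ) : Finset (Fin l → ℕ) :=
  (Finset.Iic mu).filter fun τ => ∑ i, τ i = k

/-- The irreducible character χ^λ_μ(q) of the q-rook monoid algebra R_n(q), via the
Frobenius formula χ^λ_μ(q) = (q^{|μ|}/(q-1)^{l(μ)}) ⟨q̂_μ(q⁻¹), s_λ⟩. -/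
def chi {r l : ℕ} (lam : Fin r → ℕ) (mu : Fin l → ℕ) : FF :=
  qv ^ (∑ i, mu i) / (qv - 1) ^ (ell mu) * hall (qhatProd qv⁻¹ mu) (schur lam)

/-- The hook length h_{ij} = λ_i + λ'_j - i - j + 1 of λ at the (0-indexed) box (i,j),
where λ'_j = #{i' : λ_{i'} > j} is the conjugate partition. -/
def hookLen {r : ℕ} (lam : Fin r → ℕ) (i : Fin r) (j : ℕ) : ℕ :=
  (lam i - j) + ((Finset.univ.filter fun i' : Fin r => j < lam i').card - (i : ℕ)) - 1




-- hall over superset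
lemma hall_eq_sum_subset (f g : SymF) (S : Finset (ℕ+ →₀ ℕ)) (h : f.support ⊆ S) :
    hall f g = ∑ d ∈ S, MvPolynomial.coeff d f * MvPolynomial.coeff d g * zfac d := by
  apply Finset.sum_subset h
  intro d _ hd
  rw [MvPolynomial.notMem_support_iff.mp hd, zero_mul, zero_mul]

lemma hall_smul (c : FF) (f g : SymF) : hall (c • f) g = c * hall f g := by
  rw [hall_eq_sum_subset (c • f) g f.support (MvPolynomial.support_smul),
    hall, Finset.mul_sum]
  apply Finset.sum_congr rfl
  intro d _
  rw [MvPolynomial.coeff_smul, smul_eq_mul]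
  ring

lemma hall_add (f f' g : SymF) : hall (f + f') g = hall f g + hall f' g := by
  rw [hall_eq_sum_subset (f + f') g (f.support ∪ f'.support)
      (MvPolynomial.support_add),
    hall_eq_sum_subset f g (f.support ∪ f'.support) subset_union_left,
    hall_eq_sum_subset f' g (f.support ∪ f'.support) subset_union_right,
    ← Finset.sum_add_distrib]
  apply Finset.sum_congr rfl
  intro d _
  rw [MvPolynomial.coeff_add]
  ring

lemma hall_sum {ι : Type*} (s : Finset ι) (f : ι → SymF) (g : SymF) :
    hall (∑ i ∈ s, f i) g = ∑ i ∈ s, hall (f i) g := by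
  classical
  induction s using Finset.induction_on with
  | empty => simp [hall]
  | insert _ _ h ih => rw [Finset.sum_insert h, hall_add, ih, Finset.sum_insert h]

lemma zfac_single_one (k : ℕ) : zfac (Finsupp.single 1 k) = (Nat.factorial k : FF) := by
  cases k with
  | zero => simp [zfac]
  | succ k =>
      rw [zfac, Finsupp.support_single_ne_zero _ (Nat.succ_ne_zero k)]
      simp

lemma hall_X1_pow (k : ℕ) (g : SymF) :
    hall ((pp 1) ^ k) g = MvPolynomial.coeff (Finsupp.single 1 k) g * (Nat.factorial k : FF) := by
  rw [hall_eq_sum_subset _ g {Finsupp.single 1 k}]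
  · rw [Finset.sum_singleton, pp, MvPolynomial.X_pow_eq_monomial,
      MvPolynomial.coeff_monomial, if_pos rfl, one_mul, zfac_single_one]
  · rw [pp, MvPolynomial.X_pow_eq_monomial]
    exact MvPolynomial.support_monomial_subset

/-- the weight function -/
def wt : ℕ+ → ℕ := fun i => (i : ℕ)

lemma IsWH_smul {c : FF} {f : SymF} {n : ℕ}
    (h : MvPolynomial.IsWeightedHomogeneous wt f n) :
    MvPolynomial.IsWeightedHomogeneous wt (c • f) n := by
  rw [← MvPolynomial.mem_weightedHomogeneousSubmodule] at h ⊢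
  exact Submodule.smul_mem _ c h

lemma hh_homog : ∀ n : ℕ, MvPolynomial.IsWeightedHomogeneous wt (hh n) n := by
  intro n
  induction n using Nat.strong_induction_on with
  | _ n ih =>
    match n with
    | 0 => rw [hh]; exact MvPolynomial.isWeightedHomogeneous_one _ _
    | Nat.succ n =>
        rw [hh]
        apply IsWH_smul
        apply MvPolynomial.IsWeightedHomogeneous.sum
        intro k hk
        rw [Finset.mem_range] at hk
        have h1 := MvPolynomial.isWeightedHomogeneous_X FF wt ⟨k + 1, Nat.succ_pos k⟩
        have h2 := ih (n - k) (by omega)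
        have := h1.mul h2
        convert this using 1
        show n + 1 = (k + 1) + (n - k)
        omega
        rfl

lemma hZ_homog (k : ℤ) : MvPolynomial.IsWeightedHomogeneous wt (hZ k) k.toNat := by
  rw [hZ]
  split
  · exact hh_homog _
  · exact MvPolynomial.isWeightedHomogeneous_zero FF wt _

lemma schur_homog {r : ℕ} (lam : Fin r → ℕ) (m : ℕ) (hm : ∑ i, lam i = m) :
    MvPolynomial.IsWeightedHomogeneous wt (schur lam) m := by
  rw [schur, Matrix.det_apply']
  apply MvPolynomial.IsWeightedHomogeneous.sum
  intro σ _
  have hC : MvPolynomial.IsWeightedHomogeneous wt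
      ((↑(Equiv.Perm.sign σ) : SymF)) 0 := by
    rcases Int.units_eq_one_or (Equiv.Perm.sign σ) with h | h
    · rw [h]; exact_mod_cast MvPolynomial.isWeightedHomogeneous_one FF wt
    · rw [h]
      have : ((((-1 : ℤˣ) : ℤ)) : SymF) = MvPolynomial.C (-1 : FF) := by
        simp
      rw [this]
      exact MvPolynomial.isWeightedHomogeneous_C wt _
  by_cases hpos : ∀ i : Fin r, 0 ≤ (lam (σ i) : ℤ) + (i : ℤ) - ((σ i : ℕ) : ℤ)
  · have hprod := MvPolynomial.IsWeightedHomogeneous.prod Finset.univ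
      (fun i : Fin r => hZ ((lam (σ i) : ℤ) + (i : ℤ) - ((σ i : ℕ) : ℤ)))
      (fun i : Fin r => ((lam (σ i) : ℤ) + (i : ℤ) - ((σ i : ℕ) : ℤ)).toNat)
      (fun i _ => hZ_homog _)
    have hdeg : ∑ i : Fin r,
        ((lam (σ i) : ℤ) + (i : ℤ) - ((σ i : ℕ) : ℤ)).toNat = m := by
      have : ((∑ i : Fin r,
          ((lam (σ i) : ℤ) + (i : ℤ) - ((σ i : ℕ) : ℤ)).toNat : ℕ) : ℤ)
          = ((m : ℕ) : ℤ) := by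
        push_cast
        rw [Finset.sum_congr rfl (fun i _ => Int.toNat_of_nonneg (hpos i))]
        rw [Finset.sum_sub_distrib, Finset.sum_add_distrib]
        have e1 : ∑ i : Fin r, ((lam (σ i) : ℤ)) = ∑ i : Fin r, (lam i : ℤ) :=
          Equiv.sum_comp σ (fun i => (lam i : ℤ))
        have e2 : ∑ i : Fin r, (((σ i : ℕ) : ℤ)) = ∑ i : Fin r, ((i : ℕ) : ℤ) :=
          Equiv.sum_comp σ (fun i : Fin r => ((i : ℕ) : ℤ))
        rw [e1, e2, ← hm]
        push_cast
        ring
      exact_mod_cast this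
    rw [hdeg] at hprod
    have := hC.mul hprod
    rw [zero_add] at this
    convert this using 2
    rfl
  · push_neg at hpos
    obtain ⟨i, hi⟩ := hpos
    have hzero : (∏ i : Fin r,
        (Matrix.of fun i j : Fin r => hZ ((lam i : ℤ) + (j : ℤ) - (i : ℤ))) (σ i) i) = 0 := by
      apply Finset.prod_eq_zero (Finset.mem_univ i)
      show hZ _ = 0
      rw [hZ, if_neg (by exact not_le.mpr hi)]
    rw [hzero, mul_zero]
    exact MvPolynomial.isWeightedHomogeneous_zero FF wt _

instance inst_s7 : CharZero FF := IsFractionRing.charZero_of_isFractionRing (Polynomial ℚ)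

/-- The evaluation point sending p_1 to 1 and all other power sums to 0. -/
def xev : ℕ+ → FF := fun i => if i = 1 then 1 else 0

lemma eval_hh (n : ℕ) : MvPolynomial.eval xev (hh n) = ((Nat.factorial n : FF))⁻¹ := by
  induction n using Nat.strong_induction_on with
  | _ n ih =>
    match n with
    | 0 => rw [hh]; simp
    | Nat.succ n =>
        rw [hh, MvPolynomial.smul_eq_C_mul, map_mul, MvPolynomial.eval_C, map_sum]
        have hterm : ∀ k ∈ Finset.range (n + 1),
            MvPolynomial.eval xev (pp ⟨k + 1, Nat.succ_pos k⟩ * hh (n - k)) =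
              if k = 0 then ((Nat.factorial n : FF))⁻¹ else 0 := by
          intro k hk
          rw [Finset.mem_range] at hk
          rw [map_mul, show pp ⟨k + 1, Nat.succ_pos k⟩ = MvPolynomial.X (σ := ℕ+) (R := FF) ⟨k + 1, Nat.succ_pos k⟩ from rfl]
          erw [MvPolynomial.eval_X]
          by_cases h : k = 0
          · subst h
            rw [if_pos rfl]
            have : ((⟨0 + 1, Nat.succ_pos 0⟩ : ℕ+)) = 1 := rfl
            erw [this, xev, if_pos rfl, one_mul, Nat.sub_zero, ih n (by omega)]
          · erw [if_neg h, xev]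
            have : ((⟨k + 1, Nat.succ_pos k⟩ : ℕ+)) ≠ 1 := by
              intro hc
              apply h
              have := congrArg (fun x : ℕ+ => (x : ℕ)) hc
              exact Nat.succ_injective this
            erw [if_neg this, zero_mul]
        rw [Finset.sum_congr rfl hterm, Finset.sum_ite_eq' (Finset.range (n + 1)) 0,
          if_pos (Finset.mem_range.mpr (by omega))]
        rw [Nat.factorial_succ]
        have h1 : ((n : FF) + 1) ≠ 0 := Nat.cast_add_one_ne_zero n
        have h2 : ((Nat.factorial n : FF)) ≠ 0 := Nat.cast_ne_zero.mpr (Nat.factorial_ne_zero n)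
        field_simp
        norm_cast

lemma weight_single_one (k : ℕ) : Finsupp.weight wt (Finsupp.single 1 k) = k := by
  rw [Finsupp.weight_apply, Finsupp.sum_single_index]
  · show k * wt 1 = k
    simp [wt]
  · simp

lemma eval_eq_coeff {f : SymF} {m : ℕ}
    (hf : MvPolynomial.IsWeightedHomogeneous wt f m) :
    MvPolynomial.eval xev f = MvPolynomial.coeff (Finsupp.single 1 m) f := by
  rw [MvPolynomial.eval_eq]
  have hterm : ∀ d ∈ f.support,
      MvPolynomial.coeff d f * ∏ i ∈ d.support, xev i ^ d i =
        if d = Finsupp.single 1 m then MvPolynomial.coeff d f else 0 := by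
    intro d hd
    by_cases h : d = Finsupp.single 1 m
    · rw [if_pos h]
      have : ∏ i ∈ d.support, xev i ^ d i = 1 := by
        apply Finset.prod_eq_one
        intro i hi
        have : i = 1 := by
          subst h
          have := Finsupp.support_single_subset hi
          simpa using this
        subst this
        rw [xev, if_pos rfl, one_pow]
      rw [this, mul_one]
    · rw [if_neg h]
      have hex : ∃ i ∈ d.support, i ≠ 1 := by
        by_contra hc
        push_neg at hc
        apply h
        have hd1 : d = Finsupp.single 1 (d 1) := by
          ext a
          by_cases ha : a = 1
          · subst ha; simp
          · rw [Finsupp.single_apply, if_neg (Ne.symm ha)]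
            by_contra hda
            exact ha (hc a (Finsupp.mem_support_iff.mpr hda))
        have hw := hf (MvPolynomial.mem_support_iff.mp hd)
        rw [hd1] at hw ⊢
        rw [weight_single_one] at hw
        rw [hw]
      obtain ⟨i, hi, hi1⟩ := hex
      have : ∏ j ∈ d.support, xev j ^ d j = 0 := by
        apply Finset.prod_eq_zero hi
        rw [xev, if_neg hi1]
        exact zero_pow (Finsupp.mem_support_iff.mp hi)
      rw [this, mul_zero]
  rw [Finset.sum_congr rfl hterm, Finset.sum_ite_eq' f.support]
  split
  · rfl
  · next h => rw [MvPolynomial.notMem_support_iff.mp h]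

def gq (k : ℤ) : FF := if 0 ≤ k then ((k.toNat).factorial : FF)⁻¹ else 0

lemma eval_hZ (k : ℤ) : MvPolynomial.eval xev (hZ k) = gq k := by
  rw [hZ, gq]
  split
  · exact eval_hh _
  · simp

lemma eval_schur {r : ℕ} (lam : Fin r → ℕ) :
    MvPolynomial.eval xev (schur lam) =
      Matrix.det (Matrix.of fun i j : Fin r => gq ((lam i : ℤ) + (j : ℤ) - (i : ℤ))) := by
  rw [schur, RingHom.map_det]
  congr 1
  ext i j
  exact eval_hZ _

lemma fact_mul_gq (n c : ℕ) :
    ((n.factorial : FF)) * gq ((n : ℤ) - (c : ℤ)) = ∏ t ∈ range c, ((n : FF) - (t : ℕ)) := by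
  by_cases h : c ≤ n
  · have h0 : (0 : ℤ) ≤ (n : ℤ) - c := by omega
    have h1 : ((n : ℤ) - (c : ℤ)).toNat = n - c := by omega
    rw [gq, if_pos h0, h1]
    have h2 : (∏ t ∈ range c, ((n : FF) - (t : ℕ))) = ((n.descFactorial c : FF)) := by
      rw [Nat.descFactorial_eq_prod_range, Nat.cast_prod]
      apply Finset.prod_congr rfl
      intro t ht
      rw [Finset.mem_range] at ht
      rw [Nat.cast_sub (by omega)]
    rw [h2]
    have h3 := Nat.factorial_mul_descFactorial h
    have h4 : ((n - c).factorial : FF) * (n.descFactorial c : FF) = (n.factorial : FF) := by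
      exact_mod_cast congrArg (fun x : ℕ => (x : FF)) h3
    have h5 : ((n - c).factorial : FF) ≠ 0 := Nat.cast_ne_zero.mpr (Nat.factorial_ne_zero _)
    rw [inv_eq_one_div, mul_one_div, eq_comm, eq_div_iff h5]
    linear_combination h4
  · rw [gq, if_neg (by omega), mul_zero]
    symm
    apply Finset.prod_eq_zero (Finset.mem_range.mpr (show n < c by omega))
    rw [sub_self]

lemma det_gq_eq {r : ℕ} (L : Fin r → ℕ) :
    (∏ i, ((L i).factorial : FF)) *
      Matrix.det (Matrix.of fun i j : Fin r => gq ((L i : ℤ) - ((r - 1 - (j : ℕ) : ℕ) : ℤ))) =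
    ∏ i, ∏ j ∈ Ioi i, ((L (Fin.rev j) : FF) - (L (Fin.rev i) : FF)) := by
  rw [← Matrix.det_mul_column]
  have hV : (Matrix.of fun i j : Fin r =>
      ((L i).factorial : FF) * (Matrix.of fun i j : Fin r =>
        gq ((L i : ℤ) - ((r - 1 - (j : ℕ) : ℕ) : ℤ))) i j) =
      Matrix.of fun i j : Fin r => ∏ t ∈ range (r - 1 - (j : ℕ)),
        ((L i : FF) - (t : ℕ)) := by
    ext i j
    exact fact_mul_gq (L i) (r - 1 - (j : ℕ))
  rw [hV]
  -- reverse rows and columns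
  rw [← Matrix.det_submatrix_equiv_self Fin.revPerm]
  -- now express as polynomial evaluations
  set p : Fin r → Polynomial FF :=
    fun j => ∏ t ∈ range (j : ℕ), (Polynomial.X - Polynomial.C ((t : ℕ) : FF)) with hp
  have h_monic : ∀ j : Fin r, (p j).Monic :=
    fun j => Polynomial.monic_prod_of_monic _ _ (fun t _ => Polynomial.monic_X_sub_C _)
  have h_deg : ∀ j : Fin r, (p j).natDegree = (j : ℕ) := by
    intro j
    rw [hp, Polynomial.natDegree_prod _ _ (fun t _ => (Polynomial.monic_X_sub_C _).ne_zero)]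
    rw [Finset.sum_congr rfl (fun t _ => Polynomial.natDegree_X_sub_C ((t : ℕ) : FF)),
      Finset.sum_const, smul_eq_mul, mul_one, Finset.card_range]
  have hsub : ((Matrix.of fun i j : Fin r => ∏ t ∈ range (r - 1 - (j : ℕ)),
        ((L i : FF) - (t : ℕ))).submatrix Fin.revPerm Fin.revPerm) =
      Matrix.of (fun i j : Fin r => (p j).eval ((L (Fin.rev i) : FF))) := by
    ext i j
    have hval : (Fin.rev j : ℕ) = r - 1 - (j : ℕ) := by
      have := Fin.val_rev j
      omega
    have h2 : r - 1 - ((Fin.rev j : ℕ)) = (j : ℕ) := by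
      have hj := j.isLt
      omega
    simp only [Matrix.submatrix_apply, Matrix.of_apply, Fin.revPerm_apply, h2, hp]
    rw [Polynomial.eval_prod]
    apply Finset.prod_congr rfl
    intro t _
    rw [Polynomial.eval_sub, Polynomial.eval_X, Polynomial.eval_C]
  rw [hsub, ← Matrix.det_eval_matrixOfPolynomials_eq_det_vandermonde _ p h_deg h_monic,
    Matrix.det_vandermonde]

lemma prod_Ioi_rev {r : ℕ} (x : Fin r → FF) :
    ∏ i, ∏ j ∈ Ioi i, (x (Fin.rev j) - x (Fin.rev i)) = ∏ i, ∏ j ∈ Ioi i, (x i - x j) := by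
  rw [Finset.prod_sigma' univ (fun i => Ioi i) (fun i j => x (Fin.rev j) - x (Fin.rev i)),
    Finset.prod_sigma' univ (fun i => Ioi i) (fun i j => x i - x j)]
  apply Finset.prod_bij' (fun a _ => (⟨Fin.rev a.2, Fin.rev a.1⟩ : Σ _ : Fin r, Fin r))
    (fun a _ => (⟨Fin.rev a.2, Fin.rev a.1⟩ : Σ _ : Fin r, Fin r))
  · intro a ha
    rw [Finset.mem_sigma] at ha ⊢
    exact ⟨Finset.mem_univ _, Finset.mem_Ioi.mpr (Fin.rev_lt_rev.mpr (Finset.mem_Ioi.mp ha.2))⟩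
  · intro a ha
    rw [Finset.mem_sigma] at ha ⊢
    exact ⟨Finset.mem_univ _, Finset.mem_Ioi.mpr (Fin.rev_lt_rev.mpr (Finset.mem_Ioi.mp ha.2))⟩
  · intro a _
    simp [Fin.rev_rev]
  · intro a _
    simp [Fin.rev_rev]
  · intro a _
    rfl

section Hooks

variable {r : ℕ} {lam : Fin r → ℕ}

/-- ℓ_i = λ_i + (r - 1 - i). -/
def llf (lam : Fin r → ℕ) (i : Fin r) : ℕ := lam i + (r - 1 - (i : ℕ))

lemma llf_strictAnti (hanti : ∀ i j : Fin r, i ≤ j → lam j ≤ lam i) (i i' : Fin r) (h : i < i') : llf lam i' < llf lam i := by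
  have h1 := hanti i i' (le_of_lt h)
  have h2 : (i : ℕ) < (i' : ℕ) := h
  have h3 : (i' : ℕ) < r := i'.isLt
  unfold llf
  omega

lemma AB_card (j : ℕ) :
    (Finset.univ.filter fun i' : Fin r => lam i' ≤ j).card
      + (Finset.univ.filter fun i' : Fin r => j < lam i').card = r := by
  classical
  have h := Finset.card_filter_add_card_filter_not
    (s := (Finset.univ : Finset (Fin r))) (p := fun i' : Fin r => lam i' ≤ j)
  simp only [Finset.card_univ, Fintype.card_fin, not_le] at h
  exact h

lemma B_ge (hanti : ∀ i j : Fin r, i ≤ j → lam j ≤ lam i) (i : Fin r) (j : ℕ) (hj : j < lam i) :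
    (i : ℕ) + 1 ≤ (Finset.univ.filter fun i' : Fin r => j < lam i').card := by
  have hsub : Finset.Iic i ⊆ Finset.univ.filter fun i' : Fin r => j < lam i' := by
    intro i'' hi''
    rw [Finset.mem_Iic] at hi''
    rw [Finset.mem_filter]
    exact ⟨Finset.mem_univ _, lt_of_lt_of_le hj (hanti i'' i hi'')⟩
  calc (i : ℕ) + 1 = (Finset.Iic i).card := (Fin.card_Iic i).symm
    _ ≤ _ := Finset.card_le_card hsub

lemma c_notin (hanti : ∀ i j : Fin r, i ≤ j → lam j ≤ lam i) (j : ℕ) (k : Fin r) :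
    j + (Finset.univ.filter fun i' : Fin r => lam i' ≤ j).card ≠ llf lam k := by
  have hk : (k : ℕ) < r := k.isLt
  by_cases h : lam k ≤ j
  · have hsub : Finset.Ici k ⊆ Finset.univ.filter fun i' : Fin r => lam i' ≤ j := by
      intro i' hi'
      rw [Finset.mem_Ici] at hi'
      rw [Finset.mem_filter]
      exact ⟨Finset.mem_univ _, le_trans (hanti k i' hi') h⟩
    have hA : r - (k : ℕ) ≤ (Finset.univ.filter fun i' : Fin r => lam i' ≤ j).card := by
      calc r - (k : ℕ) = (Finset.Ici k).card := (Fin.card_Ici k).symm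
        _ ≤ _ := Finset.card_le_card hsub
    unfold llf
    omega
  · push_neg at h
    have hsub : (Finset.univ.filter fun i' : Fin r => lam i' ≤ j) ⊆ Finset.Ioi k := by
      intro i' hi'
      rw [Finset.mem_filter] at hi'
      rw [Finset.mem_Ioi]
      by_contra hc
      push_neg at hc
      have := hanti i' k hc
      omega
    have hA : (Finset.univ.filter fun i' : Fin r => lam i' ≤ j).card ≤ r - 1 - (k : ℕ) := by
      calc _ ≤ (Finset.Ioi k).card := Finset.card_le_card hsub
        _ = r - 1 - (k : ℕ) := Fin.card_Ioi k
    unfold llf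
    omega

lemma c_lt (hanti : ∀ i j : Fin r, i ≤ j → lam j ≤ lam i) (i : Fin r) (j : ℕ) (hj : j < lam i) :
    j + (Finset.univ.filter fun i' : Fin r => lam i' ≤ j).card < llf lam i := by
  have h1 := AB_card (lam := lam) j
  have h2 := B_ge hanti i j hj
  have h3 : (i : ℕ) < r := i.isLt
  unfold llf
  omega

lemma hook_eq (hanti : ∀ i j : Fin r, i ≤ j → lam j ≤ lam i) (i : Fin r) (j : ℕ) (hj : j < lam i) :
    hookLen lam i j = llf lam i -
      (j + (Finset.univ.filter fun i' : Fin r => lam i' ≤ j).card) := by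
  have h1 := AB_card (lam := lam) j
  have h2 := B_ge hanti i j hj
  have h3 : (i : ℕ) < r := i.isLt
  unfold hookLen llf
  omega

lemma row_hook (hanti : ∀ i j : Fin r, i ≤ j → lam j ≤ lam i) (i : Fin r) :
    (∏ j ∈ range (lam i), hookLen lam i j) * (∏ i' ∈ Ioi i, (llf lam i - llf lam i'))
      = (llf lam i).factorial := by
  classical
  set A : ℕ → ℕ := fun j => (Finset.univ.filter fun i' : Fin r => lam i' ≤ j).card with hA
  set c : ℕ → ℕ := fun j => j + A j with hc
  have hcmono : StrictMono c := by
    intro a b hab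
    have : A a ≤ A b := by
      apply Finset.card_le_card
      intro i' hi'
      rw [Finset.mem_filter] at hi' ⊢
      exact ⟨hi'.1, le_trans hi'.2 (le_of_lt hab)⟩
    simp only [hc]
    omega
  set S : Finset ℕ := (range (lam i)).image c with hS
  set Lset : Finset ℕ := (Ioi i).image (llf lam) with hL
  have hLsub : Lset ⊆ range (llf lam i) := by
    intro s hs
    rw [hL, Finset.mem_image] at hs
    obtain ⟨i', hi', rfl⟩ := hs
    rw [Finset.mem_range]
    exact llf_strictAnti hanti i i' (Finset.mem_Ioi.mp hi')
  have hLcard : Lset.card = r - 1 - (i : ℕ) := by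
    rw [hL, Finset.card_image_of_injOn, Fin.card_Ioi]
    intro a ha b hb hab
    by_contra hne
    rcases lt_or_gt_of_ne hne with h | h
    · exact absurd hab (Nat.ne_of_gt (llf_strictAnti hanti a b h))
    · exact absurd hab (Nat.ne_of_lt (llf_strictAnti hanti b a h))
  have hScard : S.card = lam i := by
    rw [hS, Finset.card_image_of_injOn (Function.Injective.injOn hcmono.injective), Finset.card_range]
  have hSsub : S ⊆ range (llf lam i) \ Lset := by
    intro s hs
    rw [hS, Finset.mem_image] at hs
    obtain ⟨j, hj, rfl⟩ := hs
    rw [Finset.mem_range] at hj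
    rw [Finset.mem_sdiff, Finset.mem_range]
    constructor
    · exact c_lt hanti i j hj
    · rw [hL, Finset.mem_image]
      rintro ⟨k, _, hk⟩
      exact c_notin hanti j k hk.symm
  have hcard_sdiff : (range (llf lam i) \ Lset).card = lam i := by
    rw [Finset.card_sdiff_of_subset hLsub, Finset.card_range, hLcard]
    have h3 : (i : ℕ) < r := i.isLt
    unfold llf
    omega
  have hSeq : S = range (llf lam i) \ Lset :=
    Finset.eq_of_subset_of_card_le hSsub (by rw [hcard_sdiff, hScard])
  have e1 : ∏ j ∈ range (lam i), hookLen lam i j = ∏ s ∈ S, (llf lam i - s) := by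
    rw [hS, Finset.prod_image (fun a ha b hb hab => hcmono.injective hab)]
    apply Finset.prod_congr rfl
    intro j hj
    exact hook_eq hanti i j (Finset.mem_range.mp hj)
  have e2 : ∏ i' ∈ Ioi i, (llf lam i - llf lam i') = ∏ s ∈ Lset, (llf lam i - s) := by
    rw [hL, Finset.prod_image]
    intro a ha b hb hab
    by_contra hne
    rcases lt_or_gt_of_ne hne with h | h
    · exact absurd hab (Nat.ne_of_gt (llf_strictAnti hanti a b h))
    · exact absurd hab (Nat.ne_of_lt (llf_strictAnti hanti b a h))
  rw [e1, e2, hSeq, Finset.prod_sdiff hLsub]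
  rw [← Nat.descFactorial_self, Nat.descFactorial_eq_prod_range]

end Hooks

lemma qv_ne_zero : (qv : FF) ≠ 0 := RatFunc.X_ne_zero

lemma qv_ne_one : (qv : FF) ≠ 1 := by
  intro h
  have h2 : (RatFunc.X : FF).num = (1 : FF).num := by
    rw [show (RatFunc.X : FF) = qv from rfl, h]
  rw [RatFunc.num_X, RatFunc.num_one] at h2
  have := congrArg (Polynomial.coeff · 0) h2
  simp at this

lemma qhat_one (a : FF) : qhat a 1 = MvPolynomial.C (1 - a) * (1 + pp 1) := by
  show qhat a (0 + 1) = _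
  rw [qhat]
  simp only [Nat.cast_zero, zero_add, inv_one, one_smul, Finset.range_one,
    Finset.sum_singleton, pow_one, Nat.sub_zero]
  rw [show qhat a 0 = 1 from by rw [qhat], mul_one]
  rfl

lemma one_add_pp_pow (n : ℕ) :
    ((1 : SymF) + pp 1) ^ n = ∑ j ∈ Finset.range (n + 1), (n.choose j : FF) • (pp 1) ^ j := by
  rw [add_comm, add_pow]
  apply Finset.sum_congr rfl
  intro j _
  rw [one_pow, mul_one, MvPolynomial.smul_eq_C_mul, mul_comm]
  congr 1

/-- For a partition λ ⊢ m and n ≥ m, χ^λ_{(1^n)}(q) = C(n,m)·m!/∏_{(i,j)∈λ} h_{ij}. -/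
theorem chi_column (r n m : ℕ) (lam : Fin r → ℕ)
    (hlam_anti : ∀ i j : Fin r, i ≤ j → lam j ≤ lam i) (hlam_sum : ∑ i, lam i = m)
    (hmn : m ≤ n) :
    chi lam (fun _ : Fin n => 1) =
      (n.choose m : FF) * (m.factorial : FF) /
        ∏ i : Fin r, ∏ j ∈ Finset.range (lam i), (hookLen lam i j : FF) := by
  classical
  have hsum : ∑ _i : Fin n, (1 : ℕ) = n := by simp
  have hell : ell (fun _ : Fin n => (1 : ℕ)) = n := by
    unfold ell
    simp
  have hprod : qhatProd qv⁻¹ (fun _ : Fin n => (1 : ℕ)) =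
      MvPolynomial.C ((1 - qv⁻¹) ^ n) * ((1 : SymF) + pp 1) ^ n := by
    unfold qhatProd
    rw [Finset.prod_congr rfl (fun i _ => qhat_one qv⁻¹), Finset.prod_const,
      Finset.card_univ, Fintype.card_fin, mul_pow, map_pow]
  -- the Hall pairing
  have hhall : hall (qhatProd qv⁻¹ (fun _ : Fin n => (1 : ℕ))) (schur lam) =
      (1 - qv⁻¹) ^ n * ((n.choose m : FF) *
        (MvPolynomial.coeff (Finsupp.single 1 m) (schur lam) * (m.factorial : FF))) := by
    rw [hprod, ← MvPolynomial.smul_eq_C_mul, hall_smul]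
    congr 1
    rw [one_add_pp_pow, hall_sum,
      Finset.sum_congr rfl (fun j _ => by rw [hall_smul, hall_X1_pow])]
    rw [Finset.sum_eq_single_of_mem m (Finset.mem_range.mpr (by omega))]
    intro j _ hjm
    have hz : MvPolynomial.coeff (Finsupp.single 1 j) (schur lam) = 0 :=
      (schur_homog lam m hlam_sum).coeff_eq_zero _
        (by rw [weight_single_one]; exact_mod_cast hjm)
    rw [hz, zero_mul, mul_zero]
  -- nonvanishing facts
  have hF : (∏ i : Fin r, ((llf lam i).factorial : FF)) ≠ 0 :=
    Finset.prod_ne_zero_iff.mpr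
      (fun i _ => Nat.cast_ne_zero.mpr (Nat.factorial_ne_zero _))
  -- the coefficient via the determinant
  have hcoeff : MvPolynomial.coeff (Finsupp.single 1 m) (schur lam) =
      (∏ i : Fin r, ((llf lam i).factorial : FF))⁻¹ *
        ∏ i : Fin r, ∏ j ∈ Ioi i, ((llf lam i : FF) - (llf lam j : FF)) := by
    rw [← eval_eq_coeff (schur_homog lam m hlam_sum), eval_schur]
    have hM : (Matrix.of fun i j : Fin r => gq ((lam i : ℤ) + (j : ℤ) - (i : ℤ))) =
        Matrix.of fun i j : Fin r =>
          gq ((llf lam i : ℤ) - ((r - 1 - (j : ℕ) : ℕ) : ℤ)) := by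
      ext i j
      show gq _ = gq _
      congr 1
      have hi := i.isLt
      have hj := j.isLt
      unfold llf
      omega
    rw [hM]
    have hdet := det_gq_eq (llf lam)
    have hrev := prod_Ioi_rev (fun i => ((llf lam i : ℕ) : FF))
    rw [hrev] at hdet
    rw [inv_mul_eq_div, eq_div_iff hF, mul_comm]
    exact hdet
  -- the ℕ-level hook computation
  set Hnat := ∏ i : Fin r, ∏ j ∈ range (lam i), hookLen lam i j with hHnat
  set Dnat := ∏ i : Fin r, ∏ j ∈ Ioi i, (llf lam i - llf lam j) with hDnat
  have hHD : Hnat * Dnat = ∏ i : Fin r, (llf lam i).factorial := by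
    rw [hHnat, hDnat, ← Finset.prod_mul_distrib]
    exact Finset.prod_congr rfl (fun i _ => row_hook hlam_anti i)
  have hHDne : Hnat ≠ 0 ∧ Dnat ≠ 0 := by
    have : Hnat * Dnat ≠ 0 := by
      rw [hHD]
      exact Finset.prod_ne_zero_iff.mpr (fun i _ => Nat.factorial_ne_zero _)
    exact ⟨fun h => this (by rw [h, zero_mul]), fun h => this (by rw [h, mul_zero])⟩
  have hDff : (∏ i : Fin r, ∏ j ∈ Ioi i, ((llf lam i : FF) - (llf lam j : FF)))
      = (Dnat : FF) := by
    rw [hDnat, Nat.cast_prod]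
    apply Finset.prod_congr rfl
    intro i _
    rw [Nat.cast_prod]
    apply Finset.prod_congr rfl
    intro j hj
    rw [Nat.cast_sub (le_of_lt (llf_strictAnti hlam_anti i j (Finset.mem_Ioi.mp hj)))]
  have hHff : (∏ i : Fin r, ∏ j ∈ Finset.range (lam i), (hookLen lam i j : FF))
      = (Hnat : FF) := by
    rw [hHnat]
    push_cast
    rfl
  have hFfact : (∏ i : Fin r, ((llf lam i).factorial : FF)) = (Hnat : FF) * (Dnat : FF) := by
    rw [← Nat.cast_mul, hHD, Nat.cast_prod]
  -- assemble
  rw [chi, hell, hsum, hhall, hcoeff, hDff, hHff, hFfact]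
  have hq0 : (qv : FF) ≠ 0 := qv_ne_zero
  have hq1 : (qv : FF) - 1 ≠ 0 := sub_ne_zero.mpr qv_ne_one
  have h1q : (1 : FF) - qv⁻¹ = (qv - 1) / qv := by
    field_simp
  have hHne : (Hnat : FF) ≠ 0 := Nat.cast_ne_zero.mpr hHDne.1
  have hDne : (Dnat : FF) ≠ 0 := Nat.cast_ne_zero.mpr hHDne.2
  rw [h1q, div_pow]
  field_simp

end
end

section
/- For a partition μ = (μ_1, …, μ_l) of n with l = l(μ) nonzero parts, Σ_{i≥0} Σ_{j≥0} a_{ij}(μ;q) q^{i+j} = ∏_{i=1}^{l} (q−1) q^{μ_i−1} = (q−1)^l q^{n−l}. -/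
open Finset

noncomputable section

/-- a_{ij}(μ;t) = Σ_{τ ∈ C(μ;i)} Σ_{θ ∈ C(μ-τ;j)} (1-t⁻¹)^{l(τ)+l(θ)} (1-t)^{l(μ-τ-θ)}.
(This expression automatically vanishes when i + j > |μ|, since then the index set
of the inner sum is empty.) -/
def aco {l : ℕ} (t : FF) (mu : Fin l → ℕ) (i j : ℕ) : FF :=
  ∑ τ ∈ Cset mu i, ∑ θ ∈ Cset (mu - τ) j,
    (1 - t⁻¹) ^ (ell τ + ell θ) * (1 - t) ^ ell (mu - τ - θ)

/-- b_{ij}(μ;t) = Σ_{τ ∈ C(μ;i)} Σ_{θ ∈ C(μ-τ;j)} (1-t⁻¹)^{l(τ)+l(θ)+l(μ-τ-θ)}.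
(This expression automatically vanishes when i + j > |μ|.) -/
def bco {l : ℕ} (t : FF) (mu : Fin l → ℕ) (i j : ℕ) : FF :=
  ∑ τ ∈ Cset mu i, ∑ θ ∈ Cset (mu - τ) j,
    (1 - t⁻¹) ^ (ell τ + ell θ + ell (mu - τ - θ))


namespace Cor39Aux

def E (t : FF) (a : ℕ) : FF := if a = 0 then 1 else 1 - t⁻¹
def V (t : FF) (a : ℕ) : FF := if a = 0 then 1 else 1 - t
def W (t : FF) (c : ℕ) : FF := ∑ a ∈ Finset.range (c+1), E t a * E t (c - a)

variable (t : FF)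

lemma sum_E (c : ℕ) : ∑ k ∈ Finset.range (c+1), E t k = 1 + c * (1 - t⁻¹) := by
  rw [Finset.sum_range_succ']
  have h1 : ∀ k, E t (k+1) = 1 - t⁻¹ := fun k => by simp [E]
  simp [h1, E, mul_comm]
  ring

lemma W_succ (c : ℕ) : W t (c+1) = 2*(1-t⁻¹) + c*(1-t⁻¹)^2 := by
  rw [W, Finset.sum_range_succ']
  have h1 : ∀ a, E t (a+1) = 1 - t⁻¹ := fun a => by simp [E]
  have h2 : E t 0 = 1 := by simp [E]
  have h3 : ∀ a ∈ Finset.range (c+1), E t (a+1) * E t (c + 1 - (a+1)) = (1-t⁻¹) * E t (c - a) := by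
    intro a _
    have : c + 1 - (a+1) = c - a := by omega
    rw [h1, this]
  have h5 : E t (c + 1 - 0) = 1 - t⁻¹ := by
    have : c + 1 - 0 = c + 1 := by omega
    rw [this, h1]
  rw [Finset.sum_congr rfl h3, ← Finset.mul_sum, h2, h5]
  have h4 : ∑ a ∈ Finset.range (c+1), E t (c - a) = ∑ a ∈ Finset.range (c+1), E t a := by
    have := Finset.sum_range_reflect (fun j => E t j) (c+1)
    simpa using this
  rw [h4, sum_E]
  ring

def S (t : FF) (m : ℕ) : FF :=
  ∑ a ∈ Finset.range (m+1), ∑ b ∈ Finset.range (m+1-a),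
    E t a * E t b * V t (m-a-b) * t^(a+b)

def Sc (t : FF) (m : ℕ) : FF := ∑ c ∈ Finset.range (m+1), V t (m-c) * t^c * W t c

lemma triangle {M : Type*} [AddCommMonoid M] (g : ℕ → ℕ → M) (m : ℕ) :
    ∑ a ∈ Finset.range (m+1), ∑ b ∈ Finset.range (m+1-a), g a b
      = ∑ c ∈ Finset.range (m+1), ∑ a ∈ Finset.range (c+1), g a (c-a) := by
  induction m with
  | zero => simp
  | succ m ih =>
    have hL : ∑ a ∈ Finset.range (m+2), ∑ b ∈ Finset.range (m+2-a), g a b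
        = (∑ a ∈ Finset.range (m+1), ∑ b ∈ Finset.range (m+1-a), g a b)
          + ∑ a ∈ Finset.range (m+2), g a (m+1-a) := by
      have h1 : ∀ a ∈ Finset.range (m+2), ∑ b ∈ Finset.range (m+2-a), g a b
          = (∑ b ∈ Finset.range (m+1-a), g a b) + g a (m+1-a) := by
        intro a ha
        rw [Finset.mem_range] at ha
        have : m+2-a = (m+1-a)+1 := by omega
        rw [this, Finset.sum_range_succ]
      rw [Finset.sum_congr rfl h1, Finset.sum_add_distrib]
      congr 1
      rw [Finset.sum_range_succ]
      simp
    rw [hL, ih]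
    exact (Finset.sum_range_succ _ _).symm

lemma S_eq_Sc (m : ℕ) : S t m = Sc t m := by
  rw [S, triangle, Sc]
  refine Finset.sum_congr rfl fun c hc => ?_
  rw [Finset.mem_range] at hc
  have step : ∀ a ∈ Finset.range (c+1),
      E t a * E t (c-a) * V t (m-a-(c-a)) * t^(a+(c-a))
        = V t (m-c) * t^c * (E t a * E t (c-a)) := by
    intro a ha
    rw [Finset.mem_range] at ha
    have e1 : m-a-(c-a) = m-c := by omega
    have e2 : a+(c-a) = c := by omega
    rw [e1, e2]
    ring
  rw [Finset.sum_congr rfl step, ← Finset.mul_sum, W]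

lemma W_zero : W t 0 = 1 := by simp [W, E]

lemma Sc_one (ht : t ≠ 0) : Sc t 1 = t - 1 := by
  rw [Sc]
  rw [Finset.sum_range_succ, Finset.sum_range_succ, Finset.sum_range_zero]
  have h1 : W t 1 = 2*(1-t⁻¹) := by
    have := W_succ t 0
    simpa using this
  rw [W_zero, h1]
  simp only [V]
  norm_num
  field_simp
  ring

lemma Sc_succ (m : ℕ) (hm : 1 ≤ m) :
    Sc t (m+1) = Sc t m + t^(m+1) * (1-t⁻¹)^2 := by
  have hV : ∀ k, 1 ≤ k → V t k = 1 - t := fun k hk => by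
    rw [V, if_neg (by omega)]
  have hV0 : V t 0 = 1 := by simp [V]
  have split1 : Sc t (m+1)
      = (∑ c ∈ Finset.range (m+1), (1-t) * (t^c * W t c)) + t^(m+1) * W t (m+1) := by
    rw [Sc, Finset.sum_range_succ]
    congr 1
    · refine Finset.sum_congr rfl fun c hc => ?_
      rw [Finset.mem_range] at hc
      rw [hV (m+1-c) (by omega)]
      ring
    · rw [Nat.sub_self, hV0]; ring
  have split2 : Sc t m
      = (∑ c ∈ Finset.range m, (1-t) * (t^c * W t c)) + t^m * W t m := by
    rw [Sc, Finset.sum_range_succ]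
    congr 1
    · refine Finset.sum_congr rfl fun c hc => ?_
      rw [Finset.mem_range] at hc
      rw [hV (m-c) (by omega)]
      ring
    · rw [Nat.sub_self, hV0]; ring
  have split3 : ∑ c ∈ Finset.range (m+1), (1-t) * (t^c * W t c)
      = (∑ c ∈ Finset.range m, (1-t) * (t^c * W t c)) + (1-t) * (t^m * W t m) :=
    Finset.sum_range_succ _ _
  obtain ⟨d, rfl⟩ : ∃ d, m = d + 1 := ⟨m - 1, by omega⟩
  have hW1 : W t (d+1) = 2*(1-t⁻¹) + d*(1-t⁻¹)^2 := W_succ t d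
  have hW2 : W t (d+1+1) = 2*(1-t⁻¹) + (d+1)*(1-t⁻¹)^2 := by
    have := W_succ t (d+1); push_cast at this ⊢; exact this
  rw [split1, split2, split3, hW1, hW2]
  push_cast
  ring

lemma S_closed (ht : t ≠ 0) (m : ℕ) (hm : 1 ≤ m) : S t m = (t-1) * t^(m-1) := by
  induction m with
  | zero => omega
  | succ m ih =>
    rcases Nat.eq_or_lt_of_le hm with h | h
    · have : m = 0 := by omega
      subst this
      rw [S_eq_Sc, Sc_one t ht]
      simp
    · have hm1 : 1 ≤ m := by omega
      rw [S_eq_Sc, Sc_succ t m hm1, ← S_eq_Sc, ih hm1]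
      have e1 : t^(m+1) * (1-t⁻¹)^2 = (t-1)^2 * t^(m-1) := by
        obtain ⟨d, rfl⟩ : ∃ d, m = d + 1 := ⟨m - 1, by omega⟩
        have : t * (1 - t⁻¹) = t - 1 := by field_simp
        calc t^(d+1+1) * (1-t⁻¹)^2 = (t*(1-t⁻¹))^2 * t^d := by ring
          _ = (t-1)^2 * t^(d+1-1) := by rw [this]; norm_num
      rw [e1]
      obtain ⟨d, rfl⟩ : ∃ d, m = d + 1 := ⟨m - 1, by omega⟩
      have e2 : (d+1+1) - 1 = d + 1 := by omega
      rw [e2]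
      have e3 : d + 1 - 1 = d := by omega
      rw [e3]
      ring

lemma pow_ell_eq {l : ℕ} (x : FF) (τ : Fin l → ℕ) :
    x ^ ell τ = ∏ i, (if τ i = 0 then 1 else x) := by
  rw [ell, ← Finset.prod_const, Finset.prod_filter]
  exact Finset.prod_congr rfl fun i _ => by by_cases h : τ i = 0 <;> simp [h]

lemma Cset_eq_empty {l : ℕ} (ν : Fin l → ℕ) (k : ℕ) (h : ∑ i, ν i < k) :
    Cset ν k = ∅ := by
  rw [Finset.eq_empty_iff_forall_notMem]
  intro τ hτ
  rw [Cset, Finset.mem_filter, Finset.mem_Iic] at hτ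
  have h2 : ∑ i, τ i ≤ ∑ i, ν i := Finset.sum_le_sum fun i _ => hτ.1 i
  omega

lemma Iic_pi {l : ℕ} (f : Fin l → ℕ) :
    Finset.Iic f = Fintype.piFinset fun i => Finset.range (f i + 1) := by
  ext g
  simp [Fintype.mem_piFinset, Pi.le_def, Nat.lt_succ_iff]

lemma sub_sum_le {l : ℕ} (mu τ : Fin l → ℕ) : ∑ k, (mu - τ) k ≤ ∑ k, mu k :=
  Finset.sum_le_sum fun k _ => by simp only [Pi.sub_apply]; exact Nat.sub_le _ _

end Cor39Aux

/-- Corollary 3.9, first identity: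
Σ_{i,j≥0} a_{ij}(μ;q) q^{i+j} = ∏_{i=1}^{l} (q-1) q^{μ_i-1} = (q-1)^l q^{n-l}. -/
theorem aco_sum_qq (l n : ℕ) (mu : Fin l → ℕ)
    (hmu_anti : ∀ i j : Fin l, i ≤ j → mu j ≤ mu i) (hmu_pos : ∀ i, 0 < mu i)
    (hmu_sum : ∑ i, mu i = n) :
    (∑ᶠ i : ℕ, ∑ᶠ j : ℕ, aco tv mu i j * tv ^ (i + j)) =
        ∏ i : Fin l, (tv - 1) * tv ^ (mu i - 1) ∧
      (∏ i : Fin l, (tv - 1) * tv ^ (mu i - 1)) = (tv - 1) ^ l * tv ^ (n - l) := by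
  classical
  have ht : tv ≠ 0 := RatFunc.X_ne_zero
  open Cor39Aux in
  refine ⟨?_, ?_⟩
  · -- abbreviation for the τθ-summand
    set G : (Fin l → ℕ) → (Fin l → ℕ) → FF := fun τ θ =>
      (1 - tv⁻¹) ^ (ell τ + ell θ) * (1 - tv) ^ ell (mu - τ - θ)
        * tv ^ (∑ k, τ k + ∑ k, θ k) with hG
    have hinner : ∀ i : ℕ, (∑ᶠ j : ℕ, aco tv mu i j * tv ^ (i + j))
        = ∑ j ∈ Finset.range (n+1), aco tv mu i j * tv ^ (i + j) := by
      intro i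
      apply finsum_eq_finset_sum_of_support_subset
      intro j hj
      simp only [Function.mem_support, ne_eq] at hj
      simp only [Finset.coe_range, Set.mem_Iio]
      by_contra hjn
      push_neg at hjn
      apply hj
      have hz : aco tv mu i j = 0 := by
        rw [aco]
        refine Finset.sum_eq_zero fun τ hτ => ?_
        have h1 : ∑ k, (mu - τ) k < j := by
          have h2 := Cor39Aux.sub_sum_le mu τ
          omega
        rw [Cor39Aux.Cset_eq_empty _ _ h1, Finset.sum_empty]
      rw [hz, zero_mul]
    have houter : (∑ᶠ i : ℕ, ∑ᶠ j : ℕ, aco tv mu i j * tv ^ (i + j))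
        = ∑ i ∈ Finset.range (n+1), ∑ j ∈ Finset.range (n+1),
            aco tv mu i j * tv ^ (i+j) := by
      rw [finsum_congr hinner]
      apply finsum_eq_finset_sum_of_support_subset
      intro i hi
      simp only [Function.mem_support, ne_eq] at hi
      simp only [Finset.coe_range, Set.mem_Iio]
      by_contra hin
      push_neg at hin
      apply hi
      refine Finset.sum_eq_zero fun j _ => ?_
      have hz : aco tv mu i j = 0 := by
        rw [aco, Cor39Aux.Cset_eq_empty mu i (by omega), Finset.sum_empty]
      rw [hz, zero_mul]
    -- rewrite the summand in terms of G
    have key : ∀ i ∈ Finset.range (n+1), ∀ j ∈ Finset.range (n+1),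
        aco tv mu i j * tv ^ (i+j)
          = ∑ τ ∈ Cset mu i, ∑ θ ∈ Cset (mu - τ) j, G τ θ := by
      intro i _ j _
      rw [aco, Finset.sum_mul]
      refine Finset.sum_congr rfl fun τ hτ => ?_
      rw [Finset.sum_mul]
      refine Finset.sum_congr rfl fun θ hθ => ?_
      have hti : ∑ k, τ k = i := (Finset.mem_filter.1 hτ).2
      have htj : ∑ k, θ k = j := (Finset.mem_filter.1 hθ).2
      rw [hG]
      dsimp only
      rw [hti, htj]
    rw [houter]
    rw [Finset.sum_congr rfl fun i hi => Finset.sum_congr rfl (key i hi)]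
    -- swap the j-sum with the τ-sum
    have swap : ∀ i : ℕ, ∑ j ∈ Finset.range (n+1), ∑ τ ∈ Cset mu i,
          ∑ θ ∈ Cset (mu - τ) j, G τ θ
        = ∑ τ ∈ Cset mu i, ∑ j ∈ Finset.range (n+1),
          ∑ θ ∈ Cset (mu - τ) j, G τ θ := fun i => Finset.sum_comm
    rw [Finset.sum_congr rfl fun i _ => swap i]
    -- collapse the j-sum fiberwise
    have fib1 : ∀ τ : Fin l → ℕ, ∑ j ∈ Finset.range (n+1),
          ∑ θ ∈ Cset (mu - τ) j, G τ θ = ∑ θ ∈ Finset.Iic (mu - τ), G τ θ := by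
      intro τ
      simp only [Cset]
      refine Finset.sum_fiberwise_of_maps_to ?_ _
      intro θ hθ
      rw [Finset.mem_Iic] at hθ
      rw [Finset.mem_range]
      have h1 : ∑ k, θ k ≤ ∑ k, (mu - τ) k := Finset.sum_le_sum fun k _ => hθ k
      have h2 := Cor39Aux.sub_sum_le mu τ
      omega
    rw [Finset.sum_congr rfl fun i _ =>
      Finset.sum_congr rfl fun τ _ => fib1 τ]
    -- collapse the i-sum fiberwise
    have fib2 : ∑ i ∈ Finset.range (n+1), ∑ τ ∈ Cset mu i,
          ∑ θ ∈ Finset.Iic (mu - τ), G τ θ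
        = ∑ τ ∈ Finset.Iic mu, ∑ θ ∈ Finset.Iic (mu - τ), G τ θ := by
      simp only [Cset]
      refine Finset.sum_fiberwise_of_maps_to ?_ _
      intro τ hτ
      rw [Finset.mem_Iic] at hτ
      rw [Finset.mem_range]
      have h1 : ∑ k, τ k ≤ ∑ k, mu k := Finset.sum_le_sum fun k _ => hτ k
      omega
    rw [fib2]
    -- factor the summand over the coordinates
    have fact : ∀ τ θ : Fin l → ℕ, G τ θ
        = ∏ i, (Cor39Aux.E tv (τ i) * Cor39Aux.E tv (θ i)
            * Cor39Aux.V tv (mu i - τ i - θ i) * tv ^ (τ i + θ i)) := by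
      intro τ θ
      rw [hG]
      dsimp only
      rw [pow_add ((1:FF) - tv⁻¹), pow_add tv,
        Cor39Aux.pow_ell_eq, Cor39Aux.pow_ell_eq, Cor39Aux.pow_ell_eq,
        ← Finset.prod_pow_eq_pow_sum, ← Finset.prod_pow_eq_pow_sum,
        ← Finset.prod_mul_distrib, ← Finset.prod_mul_distrib,
        ← Finset.prod_mul_distrib, ← Finset.prod_mul_distrib]
      refine Finset.prod_congr rfl fun i _ => ?_
      simp only [Cor39Aux.E, Cor39Aux.V, Pi.sub_apply, pow_add] <;> ring
    rw [Finset.sum_congr rfl fun τ _ => Finset.sum_congr rfl fun θ _ => fact τ θ]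
    -- inner sum factorizes as a product
    have inner : ∀ τ : Fin l → ℕ,
        (∑ θ ∈ Finset.Iic (mu - τ), ∏ i, (Cor39Aux.E tv (τ i) * Cor39Aux.E tv (θ i)
            * Cor39Aux.V tv (mu i - τ i - θ i) * tv ^ (τ i + θ i)))
        = ∏ i, ∑ b ∈ Finset.range (mu i - τ i + 1),
            Cor39Aux.E tv (τ i) * Cor39Aux.E tv b
              * Cor39Aux.V tv (mu i - τ i - b) * tv ^ (τ i + b) := by
      intro τ
      rw [Cor39Aux.Iic_pi]
      have hranges : (fun i => Finset.range ((mu - τ) i + 1))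
          = fun i => Finset.range (mu i - τ i + 1) := by
        funext i; simp [Pi.sub_apply]
      rw [hranges]
      exact (Finset.prod_univ_sum (fun i => Finset.range (mu i - τ i + 1))
        (fun i b => Cor39Aux.E tv (τ i) * Cor39Aux.E tv b
          * Cor39Aux.V tv (mu i - τ i - b) * tv ^ (τ i + b))).symm
    rw [Finset.sum_congr rfl fun τ _ => inner τ]
    -- outer sum factorizes as a product
    rw [Cor39Aux.Iic_pi]
    rw [← Finset.prod_univ_sum (fun i => Finset.range (mu i + 1))
      (fun i a => ∑ b ∈ Finset.range (mu i - a + 1),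
        Cor39Aux.E tv a * Cor39Aux.E tv b
          * Cor39Aux.V tv (mu i - a - b) * tv ^ (a + b))]
    -- identify each factor with S and use the closed form
    refine Finset.prod_congr rfl fun i _ => ?_
    have hS : ∑ a ∈ Finset.range (mu i + 1), ∑ b ∈ Finset.range (mu i - a + 1),
          Cor39Aux.E tv a * Cor39Aux.E tv b
            * Cor39Aux.V tv (mu i - a - b) * tv ^ (a + b)
        = Cor39Aux.S tv (mu i) := by
      rw [Cor39Aux.S]
      refine Finset.sum_congr rfl fun a ha => ?_
      rw [Finset.mem_range] at ha
      have : mu i - a + 1 = mu i + 1 - a := by omega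
      rw [this]
    rw [hS, Cor39Aux.S_closed tv ht (mu i) (hmu_pos i)]
  · rw [Finset.prod_mul_distrib, Finset.prod_const, Finset.card_univ,
      Fintype.card_fin, Finset.prod_pow_eq_pow_sum]
    congr 1
    have h1 : ∑ i, (mu i - 1 + 1) = ∑ i, mu i :=
      Finset.sum_congr rfl fun i _ => by have := hmu_pos i; omega
    rw [Finset.sum_add_distrib, Finset.sum_const, Finset.card_univ,
      Fintype.card_fin, smul_eq_mul, mul_one] at h1
    have h2 : ∑ i, (mu i - 1) = n - l := by omega
    rw [h2]

end
end

section
/- For a partition μ = (μ_1, …, μ_l) of n with l = l(μ) nonzero parts, Σ_{i≥0} Σ_{j≥0} a_{ij}(μ;q) (−q)^i (−q)^j = ∏_{i=1}^{l} (1−q)·A(μ_i;q), where A(m;q) = ((−q)^{m−1}(q^2+6q+1) + 4)/(q+1)^2 + 2(−q)^{m−1}(q−1)m/(q+1). -/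
open Finset

noncomputable section

/-- A(m;q) = ((-q)^{m-1}(q²+6q+1)+4)/(q+1)² + 2(-q)^{m-1}(q-1)m/(q+1). -/
def Afun (q : FF) (m : ℕ) : FF :=
  ((-q) ^ (m - 1) * (q ^ 2 + 6 * q + 1) + 4) / (q + 1) ^ 2 +
    2 * (-q) ^ (m - 1) * (q - 1) * (m : FF) / (q + 1)

/-! ### Auxiliary machinery for `aco_sum_neg` -/

lemma tv_ne_zero : tv ≠ 0 := RatFunc.X_ne_zero

lemma tv_add_one_ne_zero : tv + 1 ≠ 0 := by
  intro h0
  have h : algebraMap (Polynomial ℚ) FF (Polynomial.X + Polynomial.C 1) = 0 := by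
    rw [map_add, RatFunc.algebraMap_X, Polynomial.C_1, map_one]
    exact h0
  rw [← map_zero (algebraMap (Polynomial ℚ) FF)] at h
  exact Polynomial.X_add_C_ne_zero 1 (RatFunc.algebraMap_injective ℚ h)

/-- per-part weight for a single entry of τ or θ -/
def ffw (a : ℕ) : FF := (-tv) ^ a * (if a = 0 then 1 else (1 - tv⁻¹))

/-- per-part weight for a single entry of μ - τ - θ -/
def hhw (c : ℕ) : FF := if c = 0 then 1 else (1 - tv)

def Sf (k : ℕ) : FF := ∑ b ∈ Finset.range (k + 1), ffw b

def Tf (m : ℕ) : FF := ∑ a ∈ Finset.range (m + 1), ffw a * (-tv) ^ (m - a)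

def Pf (m : ℕ) : FF :=
  ∑ a ∈ Finset.range (m + 1), ∑ b ∈ Finset.range (m - a + 1),
    ffw a * ffw b * hhw (m - a - b)

lemma Iic_eq_range (n : ℕ) : Finset.Iic n = Finset.range (n + 1) := by
  ext a; simp [Nat.lt_succ_iff]

lemma Sf_closed (k : ℕ) : Sf k = 2 / (tv + 1) + ((tv - 1) / (tv + 1)) * (-tv) ^ k := by
  have h1 : tv + 1 ≠ 0 := tv_add_one_ne_zero
  induction k with
  | zero => simp [Sf, ffw]; field_simp; ring
  | succ k ih =>
    rw [Sf, Finset.sum_range_succ, ← Sf, ih, ffw, if_neg (Nat.succ_ne_zero k)]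
    have h0 : tv ≠ 0 := tv_ne_zero
    field_simp
    ring

lemma Tf_closed (m : ℕ) : Tf m = (-tv) ^ m * (1 + (m : FF) * ((tv - 1) / tv)) := by
  have h0 : tv ≠ 0 := tv_ne_zero
  induction m with
  | zero => simp [Tf, ffw]
  | succ m ih =>
    have hstep : Tf (m + 1) = (-tv) * Tf m + ffw (m + 1) := by
      rw [Tf, Finset.sum_range_succ, Nat.sub_self, pow_zero, mul_one]
      congr 1
      rw [Tf, Finset.mul_sum]
      refine Finset.sum_congr rfl fun a ha => ?_
      have ha' : a ≤ m := Nat.lt_succ_iff.mp (Finset.mem_range.mp ha)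
      have hsub : m + 1 - a = (m - a) + 1 := by omega
      rw [hsub, pow_succ]
      ring
    rw [hstep, ih, ffw, if_neg (Nat.succ_ne_zero m)]
    push_cast
    field_simp
    ring

lemma sum_hhw (k : ℕ) (c : ℕ → FF) :
    ∑ b ∈ Finset.range (k + 1), c b * hhw (k - b)
      = (1 - tv) * (∑ b ∈ Finset.range (k + 1), c b) + tv * c k := by
  have h : ∀ b ∈ Finset.range (k + 1), c b * hhw (k - b)
      = (1 - tv) * c b + (if b = k then tv * c b else 0) := by
    intro b hb
    rcases eq_or_ne b k with rfl | hbk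
    · simp [hhw]; ring
    · have hb' : b < k := by have := Finset.mem_range.mp hb; omega
      rw [hhw, if_neg (by omega), if_neg hbk]
      ring
  rw [Finset.sum_congr rfl h, Finset.sum_add_distrib,
    Finset.sum_ite_eq' (Finset.range (k + 1)) k,
    if_pos (Finset.mem_range.mpr (Nat.lt_succ_self k))]
  simp [Finset.mul_sum]

lemma ffw_eq (b : ℕ) :
    ffw b = (1 - tv⁻¹) * (-tv) ^ b + tv⁻¹ * (if b = 0 then 1 else 0) := by
  rcases eq_or_ne b 0 with rfl | hb
  · simp [ffw]
  · simp [ffw, hb]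
    ring

lemma sum_ffw_ffw (m : ℕ) :
    ∑ a ∈ Finset.range (m + 1), ffw a * ffw (m - a)
      = (1 - tv⁻¹) * Tf m + tv⁻¹ * ffw m := by
  have h : ∀ a ∈ Finset.range (m + 1), ffw a * ffw (m - a)
      = (1 - tv⁻¹) * (ffw a * (-tv) ^ (m - a)) + (if a = m then tv⁻¹ * ffw a else 0) := by
    intro a ha
    have ha' : a ≤ m := Nat.lt_succ_iff.mp (Finset.mem_range.mp ha)
    rw [ffw_eq (m - a)]
    rcases eq_or_ne a m with rfl | ham
    · rw [Nat.sub_self, if_pos rfl, if_pos rfl]; ring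
    · rw [if_neg (by omega), if_neg ham]; ring
  rw [Finset.sum_congr rfl h, Finset.sum_add_distrib,
    Finset.sum_ite_eq' (Finset.range (m + 1)) m,
    if_pos (Finset.mem_range.mpr (Nat.lt_succ_self m)), Tf, Finset.mul_sum]

lemma sum_ffw_Sf (m : ℕ) :
    ∑ a ∈ Finset.range (m + 1), ffw a * Sf (m - a)
      = (2 / (tv + 1)) * Sf m + ((tv - 1) / (tv + 1)) * Tf m := by
  have h : ∀ a ∈ Finset.range (m + 1), ffw a * Sf (m - a)
      = (2 / (tv + 1)) * ffw a + ((tv - 1) / (tv + 1)) * (ffw a * (-tv) ^ (m - a)) := by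
    intro a _
    rw [Sf_closed]
    ring
  rw [Finset.sum_congr rfl h, Finset.sum_add_distrib, ← Finset.mul_sum, ← Finset.mul_sum,
    ← Sf, ← Tf]

lemma Pf_eq (m : ℕ) :
    Pf m = (1 - tv) * ((2 / (tv + 1)) * Sf m + ((tv - 1) / (tv + 1)) * Tf m)
      + tv * ((1 - tv⁻¹) * Tf m + tv⁻¹ * ffw m) := by
  have h : ∀ a ∈ Finset.range (m + 1),
      (∑ b ∈ Finset.range (m - a + 1), ffw a * ffw b * hhw (m - a - b))
        = (1 - tv) * (ffw a * Sf (m - a)) + tv * (ffw a * ffw (m - a)) := by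
    intro a _
    have h2 := sum_hhw (m - a) (fun b => ffw a * ffw b)
    rw [h2, Sf, ← Finset.mul_sum]
  calc Pf m
      = ∑ a ∈ Finset.range (m + 1),
          ((1 - tv) * (ffw a * Sf (m - a)) + tv * (ffw a * ffw (m - a))) :=
        Finset.sum_congr rfl h
    _ = (1 - tv) * (∑ a ∈ Finset.range (m + 1), ffw a * Sf (m - a))
          + tv * (∑ a ∈ Finset.range (m + 1), ffw a * ffw (m - a)) := by
        rw [Finset.sum_add_distrib, Finset.mul_sum, Finset.mul_sum]
    _ = _ := by rw [sum_ffw_Sf, sum_ffw_ffw]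

lemma Pf_closed (m : ℕ) (hm : 1 ≤ m) : Pf m = (1 - tv) * Afun tv m := by
  obtain ⟨k, rfl⟩ : ∃ k, m = k + 1 := ⟨m - 1, by omega⟩
  rw [Pf_eq, Sf_closed, Tf_closed, ffw, if_neg (Nat.succ_ne_zero k), Afun]
  have h0 : tv ≠ 0 := tv_ne_zero
  have h1 : tv + 1 ≠ 0 := tv_add_one_ne_zero
  simp only [Nat.add_sub_cancel]
  push_cast
  field_simp
  ring

lemma pow_ell {l : ℕ} (x : FF) (v : Fin l → ℕ) :
    x ^ ell v = ∏ i, if v i = 0 then 1 else x := by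
  rw [ell, Finset.prod_ite, Finset.prod_const_one, Finset.prod_const, one_mul]

lemma prod_ffw {l : ℕ} (v : Fin l → ℕ) :
    ∏ i, ffw (v i) = (-tv) ^ (∑ i, v i) * (1 - tv⁻¹) ^ ell v := by
  simp only [ffw]
  rw [Finset.prod_mul_distrib, Finset.prod_pow_eq_pow_sum, pow_ell]

lemma prod_hhw {l : ℕ} (v : Fin l → ℕ) :
    ∏ i, hhw (v i) = (1 - tv) ^ ell v := by
  simp only [hhw]
  rw [pow_ell]

lemma sum_Iic_pi {l : ℕ} (m : Fin l → ℕ) (g : Fin l → ℕ → FF) :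
    ∑ τ ∈ Finset.Iic m, ∏ i, g i (τ i) = ∏ i, ∑ a ∈ Finset.Iic (m i), g i a := by
  have hIic : Finset.Iic m = Fintype.piFinset (fun i => Finset.Iic (m i)) := by
    ext τ
    simp [Fintype.mem_piFinset, Pi.le_def]
  rw [hIic]
  exact (Finset.prod_univ_sum _ _).symm

/-- Corollary 3.9, identity (3.21):
Σ_{i,j≥0} a_{ij}(μ;q) (-q)^i (-q)^j = ∏_{i=1}^{l} (1-q)·A(μ_i;q). -/
theorem aco_sum_neg (l n : ℕ) (mu : Fin l → ℕ)
    (hmu_anti : ∀ i j : Fin l, i ≤ j → mu j ≤ mu i) (hmu_pos : ∀ i, 0 < mu i)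
    (hmu_sum : ∑ i, mu i = n) :
    ∑ᶠ i : ℕ, ∑ᶠ j : ℕ, aco tv mu i j * (-tv) ^ i * (-tv) ^ j =
      ∏ i : Fin l, (1 - tv) * Afun tv (mu i) := by
  classical
  have hsum_mu : ∀ {τ : Fin l → ℕ}, τ ∈ Finset.Iic mu → ∑ i, τ i ≤ n := by
    intro τ hτ
    rw [← hmu_sum]
    exact Finset.sum_le_sum fun i _ => Finset.mem_Iic.mp hτ i
  have hsub_le : ∀ τ : Fin l → ℕ, ∑ i, (mu - τ) i ≤ n := by
    intro τ
    rw [← hmu_sum]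
    exact Finset.sum_le_sum fun i _ => by simp [Pi.sub_apply]
  have hvan : ∀ i j : ℕ, n < i ∨ n < j → aco tv mu i j = 0 := by
    intro i j h
    rw [aco]
    rcases h with h | h
    · have hempty : Cset mu i = ∅ := by
        rw [Cset, Finset.filter_eq_empty_iff]
        intro τ hτ
        have := hsum_mu hτ
        omega
      rw [hempty, Finset.sum_empty]
    · refine Finset.sum_eq_zero fun τ _ => ?_
      have hempty : Cset (mu - τ) j = ∅ := by
        rw [Cset, Finset.filter_eq_empty_iff]
        intro θ hθ
        have h2 : ∑ i, θ i ≤ ∑ i, (mu - τ) i :=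
          Finset.sum_le_sum fun i _ => Finset.mem_Iic.mp hθ i
        have h3 := hsub_le τ
        omega
      rw [hempty, Finset.sum_empty]
  have hinner : ∀ i : ℕ, (∑ᶠ j : ℕ, aco tv mu i j * (-tv) ^ i * (-tv) ^ j)
      = ∑ j ∈ Finset.range (n + 1), aco tv mu i j * (-tv) ^ i * (-tv) ^ j := by
    intro i
    refine finsum_eq_sum_of_support_subset _ fun j hj => ?_
    simp only [Function.mem_support, ne_eq] at hj
    rw [Finset.coe_range, Set.mem_Iio]
    by_contra hc
    push_neg at hc
    exact hj (by rw [hvan i j (Or.inr (by omega)), zero_mul, zero_mul])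
  have houter : (∑ᶠ i : ℕ, ∑ j ∈ Finset.range (n + 1), aco tv mu i j * (-tv) ^ i * (-tv) ^ j)
      = ∑ i ∈ Finset.range (n + 1), ∑ j ∈ Finset.range (n + 1),
          aco tv mu i j * (-tv) ^ i * (-tv) ^ j := by
    refine finsum_eq_sum_of_support_subset _ fun i hi => ?_
    simp only [Function.mem_support, ne_eq] at hi
    rw [Finset.coe_range, Set.mem_Iio]
    by_contra hc
    push_neg at hc
    refine hi (Finset.sum_eq_zero fun j _ => ?_)
    rw [hvan i j (Or.inl (by omega)), zero_mul, zero_mul]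
  have hin : ∀ i j : ℕ, aco tv mu i j * (-tv) ^ i * (-tv) ^ j
      = ∑ τ ∈ Cset mu i, ∑ θ ∈ Cset (mu - τ) j,
          ∏ k, ffw (τ k) * ffw (θ k) * hhw ((mu - τ - θ) k) := by
    intro i j
    rw [aco, Finset.sum_mul, Finset.sum_mul]
    refine Finset.sum_congr rfl fun τ hτ => ?_
    rw [Finset.sum_mul, Finset.sum_mul]
    refine Finset.sum_congr rfl fun θ hθ => ?_
    have hi : ∑ k, τ k = i := (Finset.mem_filter.mp hτ).2
    have hj : ∑ k, θ k = j := (Finset.mem_filter.mp hθ).2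
    rw [← hi, ← hj, Finset.prod_mul_distrib, Finset.prod_mul_distrib,
      prod_ffw, prod_ffw, prod_hhw, pow_add]
    ring
  have hfiber1 : ∀ G : (Fin l → ℕ) → FF,
      (∑ i ∈ Finset.range (n + 1), ∑ τ ∈ Cset mu i, G τ) = ∑ τ ∈ Finset.Iic mu, G τ := by
    intro G
    exact Finset.sum_fiberwise_of_maps_to
      (fun τ hτ => Finset.mem_range.mpr (by have := hsum_mu hτ; omega)) G
  have hfiber2 : ∀ (τ : Fin l → ℕ) (G : (Fin l → ℕ) → FF),
      (∑ j ∈ Finset.range (n + 1), ∑ θ ∈ Cset (mu - τ) j, G θ)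
        = ∑ θ ∈ Finset.Iic (mu - τ), G θ := by
    intro τ G
    refine Finset.sum_fiberwise_of_maps_to (fun θ hθ => Finset.mem_range.mpr ?_) G
    have h2 : ∑ i, θ i ≤ ∑ i, (mu - τ) i :=
      Finset.sum_le_sum fun i _ => Finset.mem_Iic.mp hθ i
    have h3 := hsub_le τ
    omega
  have hfact : (∑ τ ∈ Finset.Iic mu, ∑ θ ∈ Finset.Iic (mu - τ),
      ∏ k, ffw (τ k) * ffw (θ k) * hhw ((mu - τ - θ) k)) = ∏ i, Pf (mu i) := by
    have h1 : ∀ τ : Fin l → ℕ,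
        (∑ θ ∈ Finset.Iic (mu - τ), ∏ k, ffw (τ k) * ffw (θ k) * hhw ((mu - τ - θ) k))
          = ∏ i, ∑ b ∈ Finset.Iic (mu i - τ i), ffw (τ i) * ffw b * hhw (mu i - τ i - b) :=
      fun τ => sum_Iic_pi (mu - τ) (fun i b => ffw (τ i) * ffw b * hhw (mu i - τ i - b))
    rw [Finset.sum_congr rfl fun τ _ => h1 τ]
    have h2 : (∑ τ ∈ Finset.Iic mu,
        ∏ i, ∑ b ∈ Finset.Iic (mu i - τ i), ffw (τ i) * ffw b * hhw (mu i - τ i - b))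
          = ∏ i, ∑ a ∈ Finset.Iic (mu i), ∑ b ∈ Finset.Iic (mu i - a),
              ffw a * ffw b * hhw (mu i - a - b) :=
      sum_Iic_pi mu (fun i a => ∑ b ∈ Finset.Iic (mu i - a), ffw a * ffw b * hhw (mu i - a - b))
    rw [h2]
    refine Finset.prod_congr rfl fun i _ => ?_
    rw [Pf, Iic_eq_range (mu i)]
    exact Finset.sum_congr rfl fun a _ => by rw [Iic_eq_range]
  calc ∑ᶠ i : ℕ, ∑ᶠ j : ℕ, aco tv mu i j * (-tv) ^ i * (-tv) ^ j
      = ∑ i ∈ Finset.range (n + 1), ∑ j ∈ Finset.range (n + 1),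
          aco tv mu i j * (-tv) ^ i * (-tv) ^ j := by
        rw [finsum_congr hinner]; exact houter
    _ = ∑ i ∈ Finset.range (n + 1), ∑ τ ∈ Cset mu i, ∑ j ∈ Finset.range (n + 1),
          ∑ θ ∈ Cset (mu - τ) j, ∏ k, ffw (τ k) * ffw (θ k) * hhw ((mu - τ - θ) k) := by
        refine Finset.sum_congr rfl fun i _ => ?_
        exact (Finset.sum_congr rfl fun j _ => hin i j).trans Finset.sum_comm
    _ = ∑ τ ∈ Finset.Iic mu, ∑ j ∈ Finset.range (n + 1), ∑ θ ∈ Cset (mu - τ) j,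
          ∏ k, ffw (τ k) * ffw (θ k) * hhw ((mu - τ - θ) k) := hfiber1 _
    _ = ∑ τ ∈ Finset.Iic mu, ∑ θ ∈ Finset.Iic (mu - τ),
          ∏ k, ffw (τ k) * ffw (θ k) * hhw ((mu - τ - θ) k) :=
        Finset.sum_congr rfl fun τ _ => hfiber2 τ _
    _ = ∏ i, Pf (mu i) := hfact
    _ = ∏ i : Fin l, (1 - tv) * Afun tv (mu i) :=
        Finset.prod_congr rfl fun i _ => Pf_closed (mu i) (hmu_pos i)

end
end

section
/- For a partition μ = (μ_1, …, μ_l) of n with l = l(μ) nonzero parts, Σ_{i≥0} Σ_{j≥0} b_{ij}(μ;q) = (1−q^{-1})^l · ∏_{i=1}^{l} ( 3μ_i − 3q^{-1}(μ_i−1) + (μ_i−1)(μ_i−2)(1−q^{-1})^2/2 ). -/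
open Finset

noncomputable section

instance : CharZero (RatFunc ℚ) :=
  charZero_of_injective_algebraMap (algebraMap ℚ (RatFunc ℚ)).injective

def ind (a : ℕ) : ℕ := if a = 0 then 0 else 1

def gg (x : RatFunc ℚ) (k : ℕ) : RatFunc ℚ :=
  if k = 0 then 1 else 2 * x + ((k : RatFunc ℚ) - 1) * x ^ 2

lemma Iic_succ' (k : ℕ) : Finset.Iic (k + 1) = insert (k + 1) (Finset.Iic k) := by
  ext a; simp; omega

lemma Iic_zero' : Finset.Iic (0 : ℕ) = {0} := by ext a; simp

lemma gsum (x : RatFunc ℚ) (K : ℕ) :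
    ∑ k ∈ Finset.Iic K, gg x k
      = 1 + 2 * (K : RatFunc ℚ) * x + (K : RatFunc ℚ) * ((K : RatFunc ℚ) - 1) / 2 * x ^ 2 := by
  have h2 : (2 : RatFunc ℚ) ≠ 0 := two_ne_zero
  induction K with
  | zero => rw [Iic_zero', Finset.sum_singleton]; simp [gg]
  | succ K ih =>
    rw [Iic_succ', Finset.sum_insert (by simp), ih, gg]
    simp only [Nat.succ_ne_zero, if_false]
    push_cast
    field_simp
    ring

lemma innerSum (x : RatFunc ℚ) (k : ℕ) :
    ∑ b ∈ Finset.Iic k, x ^ (ind b + ind (k - b)) = gg x k := by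
  cases k with
  | zero => rw [Iic_zero', Finset.sum_singleton]; simp [ind, gg]
  | succ k =>
    have hset : Finset.Iic (k + 1) = insert 0 (insert (k + 1) (Finset.Icc 1 k)) := by
      ext a; simp; omega
    rw [hset, Finset.sum_insert (by simp), Finset.sum_insert (by simp)]
    have hmid : ∀ b ∈ Finset.Icc 1 k, x ^ (ind b + ind (k + 1 - b)) = x ^ 2 := by
      intro b hb
      simp only [Finset.mem_Icc] at hb
      have h1 : b ≠ 0 := by omega
      have h2 : k + 1 - b ≠ 0 := by omega
      simp [ind, h1, h2]
    rw [Finset.sum_congr rfl hmid, Finset.sum_const, Nat.card_Icc]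
    simp [ind, gg, nsmul_eq_mul]
    push_cast
    ring

lemma coordSum (x : RatFunc ℚ) (m : ℕ) (hm : 1 ≤ m) :
    ∑ a ∈ Finset.Iic m, ∑ b ∈ Finset.Iic (m - a), x ^ (ind a + ind b + ind (m - a - b))
      = x * (3 + 3 * ((m : RatFunc ℚ) - 1) * x
          + ((m : RatFunc ℚ) - 1) * ((m : RatFunc ℚ) - 2) / 2 * x ^ 2) := by
  have h2 : (2 : RatFunc ℚ) ≠ 0 := two_ne_zero
  have inner : ∀ a, ∑ b ∈ Finset.Iic (m - a), x ^ (ind a + ind b + ind (m - a - b))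
      = x ^ ind a * gg x (m - a) := by
    intro a
    rw [← innerSum x (m - a), Finset.mul_sum]
    exact Finset.sum_congr rfl fun b _ => by rw [add_assoc, pow_add]
  simp only [inner]
  have hset : Finset.Iic m = insert 0 (Finset.Icc 1 m) := by ext a; simp; omega
  rw [hset, Finset.sum_insert (by simp)]
  have h1 : ∀ a ∈ Finset.Icc 1 m, x ^ ind a * gg x (m - a) = x * gg x (m - a) := by
    intro a ha
    simp only [Finset.mem_Icc] at ha
    have : a ≠ 0 := by omega
    simp [ind, this]
  rw [Finset.sum_congr rfl h1, ← Finset.mul_sum]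
  have hre : ∑ a ∈ Finset.Icc 1 m, gg x (m - a) = ∑ k ∈ Finset.Iic (m - 1), gg x k := by
    refine Finset.sum_nbij' (fun a => m - a) (fun k => m - k) ?_ ?_ ?_ ?_ ?_ <;>
      intro a ha <;> simp only [Finset.mem_Icc, Finset.mem_Iic] at * <;> omega
  rw [hre, gsum]
  have hm1 : ((m - 1 : ℕ) : RatFunc ℚ) = (m : RatFunc ℚ) - 1 := by
    push_cast [Nat.cast_sub hm]; ring
  rw [hm1]
  have hgg : gg x m = 2 * x + ((m : RatFunc ℚ) - 1) * x ^ 2 := by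
    rw [gg, if_neg (by omega)]
  rw [Nat.sub_zero, hgg]
  simp only [ind, if_pos rfl, if_true, pow_zero, one_mul]
  field_simp
  ring



lemma ell_eq_sum {l : ℕ} (nu : Fin l → ℕ) : ell nu = ∑ i, ind (nu i) := by
  rw [ell, Finset.card_filter]
  exact Finset.sum_congr rfl fun i _ => by by_cases h : nu i = 0 <;> simp [ind, h]

set_option maxHeartbeats 1000000 in
/-- Corollary 3.9, identity (3.22):
Σ_{i,j≥0} b_{ij}(μ;q)
  = (1-q⁻¹)^l ∏_{i=1}^{l} (3μ_i - 3q⁻¹(μ_i-1) + (μ_i-1)(μ_i-2)(1-q⁻¹)²/2). -/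
theorem bco_sum (l n : ℕ) (mu : Fin l → ℕ)
    (hmu_anti : ∀ i j : Fin l, i ≤ j → mu j ≤ mu i) (hmu_pos : ∀ i, 0 < mu i)
    (hmu_sum : ∑ i, mu i = n) :
    ∑ᶠ i : ℕ, ∑ᶠ j : ℕ, bco tv mu i j =
      (1 - tv⁻¹) ^ l *
        ∏ i : Fin l,
          (3 * (mu i : FF) - 3 * tv⁻¹ * ((mu i : FF) - 1) +
            ((mu i : FF) - 1) * ((mu i : FF) - 2) * (1 - tv⁻¹) ^ 2 / 2) := by
  classical
  have hsum_le : ∀ nu : Fin l → ℕ, nu ≤ mu → ∑ i, nu i ≤ n := by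
    intro nu h
    rw [← hmu_sum]
    exact Finset.sum_le_sum fun i _ => h i
  have hCmem : ∀ (nu : Fin l → ℕ) (k : ℕ) (τ : Fin l → ℕ), τ ∈ Cset nu k →
      τ ≤ nu ∧ ∑ i, τ i = k := by
    intro nu k τ hτ
    rw [Cset, Finset.mem_filter, Finset.mem_Iic] at hτ
    exact hτ
  have hb0 : ∀ i j : ℕ, n < i ∨ n < j → bco tv mu i j = 0 := by
    intro i j h
    rw [bco]
    apply Finset.sum_eq_zero
    intro τ hτ
    obtain ⟨h1t, h2t⟩ := hCmem mu i τ hτ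
    rcases h with h | h
    · have := hsum_le τ h1t
      exact ((by omega : False)).elim
    · apply Finset.sum_eq_zero
      intro θ hθ
      obtain ⟨h1, h2⟩ := hCmem (mu - τ) j θ hθ
      have hle : ∑ k, θ k ≤ n := by
        calc ∑ k, θ k ≤ ∑ k, (mu - τ) k := Finset.sum_le_sum fun k _ => h1 k
          _ ≤ ∑ k, mu k := Finset.sum_le_sum fun k _ => Nat.sub_le _ _
          _ = n := hmu_sum
      exact ((by omega : False)).elim
  have hjsum : ∀ i, ∑ᶠ j, bco tv mu i j = ∑ j ∈ Finset.range (n + 1), bco tv mu i j := by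
    intro i
    apply finsum_eq_sum_of_support_subset
    intro j hj
    simp only [Function.mem_support] at hj
    simp only [Finset.coe_range, Set.mem_Iio]
    by_contra h
    exact hj (hb0 i j (Or.inr (by omega)))
  rw [finsum_congr hjsum]
  rw [finsum_eq_sum_of_support_subset _ (s := Finset.range (n + 1)) (by
    intro i hi
    simp only [Function.mem_support] at hi
    simp only [Finset.coe_range, Set.mem_Iio]
    by_contra h
    exact hi (Finset.sum_eq_zero fun j _ => hb0 i j (Or.inl (by omega))))]
  have step1 : ∀ i ∈ Finset.range (n + 1),
      ∑ j ∈ Finset.range (n + 1), bco tv mu i j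
        = ∑ τ ∈ Cset mu i, ∑ θ ∈ Finset.Iic (mu - τ),
            (1 - tv⁻¹) ^ (ell τ + ell θ + ell (mu - τ - θ)) := by
    intro i _
    simp only [bco]
    rw [Finset.sum_comm]
    refine Finset.sum_congr rfl fun τ hτ => ?_
    obtain ⟨h1t, _⟩ := hCmem mu i τ hτ
    simp only [Cset]
    refine Finset.sum_fiberwise_of_maps_to ?_ _
    intro θ hθ
    rw [Finset.mem_Iic] at hθ
    refine Finset.mem_range.mpr (Nat.lt_succ_of_le ?_)
    calc ∑ k, θ k ≤ ∑ k, (mu - τ) k := Finset.sum_le_sum fun k _ => hθ k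
      _ ≤ ∑ k, mu k := Finset.sum_le_sum fun k _ => Nat.sub_le _ _
      _ = n := hmu_sum
  rw [Finset.sum_congr rfl step1]
  simp only [Cset]
  rw [Finset.sum_fiberwise_of_maps_to (fun τ hτ => Finset.mem_range.mpr
    (Nat.lt_succ_of_le (hsum_le τ (Finset.mem_Iic.mp hτ)))) _]
  have hpow : ∀ τ θ : Fin l → ℕ,
      (1 - tv⁻¹) ^ (ell τ + ell θ + ell (mu - τ - θ))
        = ∏ i, (1 - tv⁻¹) ^ (ind (τ i) + ind (θ i) + ind (mu i - τ i - θ i)) := by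
    intro τ θ
    rw [Finset.prod_pow_eq_pow_sum]
    congr 1
    rw [ell_eq_sum, ell_eq_sum, ell_eq_sum, ← Finset.sum_add_distrib, ← Finset.sum_add_distrib]
    exact Finset.sum_congr rfl fun i _ => by simp [Pi.sub_apply]
  have hIic : ∀ nu : Fin l → ℕ, Finset.Iic nu = Fintype.piFinset fun i => Finset.Iic (nu i) := by
    intro nu
    ext τ
    simp [Fintype.mem_piFinset, Pi.le_def]
  simp only [hpow, hIic, Pi.sub_apply]
  have hinner : ∀ τ : Fin l → ℕ,
      ∑ θ ∈ Fintype.piFinset (fun i => Finset.Iic (mu i - τ i)),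
        ∏ i, (1 - tv⁻¹) ^ (ind (τ i) + ind (θ i) + ind (mu i - τ i - θ i))
      = ∏ i, ∑ b ∈ Finset.Iic (mu i - τ i),
          (1 - tv⁻¹) ^ (ind (τ i) + ind b + ind (mu i - τ i - b)) :=
    fun τ => (Finset.prod_univ_sum (fun i => Finset.Iic (mu i - τ i))
      (fun i b => (1 - tv⁻¹) ^ (ind (τ i) + ind b + ind (mu i - τ i - b)))).symm
  simp only [hinner]
  rw [← Finset.prod_univ_sum (fun i => Finset.Iic (mu i))
    (fun i a => ∑ b ∈ Finset.Iic (mu i - a), (1 - tv⁻¹) ^ (ind a + ind b + ind (mu i - a - b)))]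
  have hpowl : ((1 : FF) - tv⁻¹) ^ l = ∏ _i : Fin l, ((1 : FF) - tv⁻¹) := by
    rw [Finset.prod_const, Finset.card_univ, Fintype.card_fin]
  rw [hpowl, ← Finset.prod_mul_distrib]
  refine Finset.prod_congr rfl fun i _ => ?_
  rw [coordSum _ _ (hmu_pos i)]
  ring


end
end
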